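/- (Derivative lemma.) Let P, Q ∈ nCSP. (i) If ⟦P⟧ ==τ̂==> ⟦Q⟧ then P ⊑_Emust Q and Q ⊑_Emay P. (ii) If ⟦P⟧ ==â==> ⟦Q⟧ (a ∈ Act) then a.Q ⊑_Emay P. -/

import Mathlib

open Classical

noncomputable section

namespace PaperPCSP

/-! ### Finitely supported distributions as weight functions -/

/-- Weight functions on `X`; probability distributions are those satisfying `IsDist`. -/
abbrev Wt (X : Type) := X → ℝ

/-- The support of a weight function. -/
def dsupp {X : Type} (Δ : Wt X) : Set X := Function.support Δ

/-- `Δ` is a finitely supported probability distribution. -/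
def IsDist {X : Type} (Δ : Wt X) : Prop :=
  (∀ x, 0 ≤ Δ x) ∧ (dsupp Δ).Finite ∧ ∑ᶠ x, Δ x = 1

/-- The point distribution at `x`. -/
def dirac {X : Type} (x : X) : Wt X := fun y => if y = x then 1 else 0

/-- Pushforward of a weight function along a map. -/
def dmap {X Y : Type} (g : X → Y) (Δ : Wt X) : Wt Y :=
  fun y => ∑ᶠ x ∈ {x | g x = y}, Δ x

/-- Expected value of `f` under `Δ`. -/
def dexp {X : Type} (Δ : Wt X) (f : X → ℝ) : ℝ := ∑ᶠ x, Δ x * f x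

/-! ### Syntax of pCSP -/

mutual
/-- Process terms of pCSP (over prefix alphabet `A`). -/
inductive PCSP (A : Type) : Type where
  | st : SCSP A → PCSP A
  | pch : ℝ → PCSP A → PCSP A → PCSP A
/-- State-based process terms of pCSP. -/
inductive SCSP (A : Type) : Type where
  | nil : SCSP A
  | pre : A → PCSP A → SCSP A
  | ich : PCSP A → PCSP A → SCSP A
  | ech : SCSP A → SCSP A → SCSP A
  | par : Set A → SCSP A → SCSP A → SCSP A
end

mutual
/-- Well-formedness: all probabilistic choices have `p ∈ (0,1)`.  `pCSP` proper
consists of the well-formed terms. -/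
inductive PWF : {A : Type} → PCSP A → Prop where
  | st {A} {s : SCSP A} : SWF s → PWF (.st s)
  | pch {A} {p : ℝ} {P Q : PCSP A} : 0 < p → p < 1 → PWF P → PWF Q → PWF (.pch p P Q)
inductive SWF : {A : Type} → SCSP A → Prop where
  | nil {A} : SWF (SCSP.nil (A := A))
  | pre {A} {a : A} {P} : PWF P → SWF (.pre a P)
  | ich {A} {P Q : PCSP A} : PWF P → PWF Q → SWF (.ich P Q)
  | ech {A} {s t : SCSP A} : SWF s → SWF t → SWF (.ech s t)
  | par {A} {B : Set A} {s t : SCSP A} : SWF s → SWF t → SWF (.par B s t)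
end

/-- Interpretation of process terms as distributions over state-based terms. -/
def PCSP.interp {A : Type} : PCSP A → Wt (SCSP A)
  | .st s => dirac s
  | .pch p P Q => fun t => p * P.interp t + (1 - p) * Q.interp t

/-! ### Operational semantics -/

/-- The probabilistic labelled transition relation; `none` is the internal action τ. -/
inductive Step {A : Type} : SCSP A → Option A → Wt (SCSP A) → Prop where
  | pre (a : A) (P : PCSP A) : Step (.pre a P) (some a) P.interp
  | ichL (P Q : PCSP A) : Step (.ich P Q) none P.interp
  | ichR (P Q : PCSP A) : Step (.ich P Q) none Q.interp
  | echL {s₁ s₂ : SCSP A} {a : A} {Δ} :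
      Step s₁ (some a) Δ → Step (.ech s₁ s₂) (some a) Δ
  | echR {s₁ s₂ : SCSP A} {a : A} {Δ} :
      Step s₂ (some a) Δ → Step (.ech s₁ s₂) (some a) Δ
  | echTL {s₁ s₂ : SCSP A} {Δ} :
      Step s₁ none Δ → Step (.ech s₁ s₂) none (dmap (fun t => .ech t s₂) Δ)
  | echTR {s₁ s₂ : SCSP A} {Δ} :
      Step s₂ none Δ → Step (.ech s₁ s₂) none (dmap (fun t => .ech s₁ t) Δ)
  | parL {B : Set A} {s₁ s₂ : SCSP A} {α : Option A} {Δ} :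
      Step s₁ α Δ → (∀ a, α = some a → a ∉ B) →
      Step (.par B s₁ s₂) α (dmap (fun t => .par B t s₂) Δ)
  | parR {B : Set A} {s₁ s₂ : SCSP A} {α : Option A} {Δ} :
      Step s₂ α Δ → (∀ a, α = some a → a ∉ B) →
      Step (.par B s₁ s₂) α (dmap (fun t => .par B s₁ t) Δ)
  | parS {B : Set A} {s₁ s₂ : SCSP A} {a : A} {Δ₁ Δ₂} :
      a ∈ B → Step s₁ (some a) Δ₁ → Step s₂ (some a) Δ₂ →
      Step (.par B s₁ s₂) none
        (dmap (fun q : SCSP A × SCSP A => .par B q.1 q.2) (fun q => Δ₁ q.1 * Δ₂ q.2))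

/-! ### Lifting relations to distributions, weak transitions -/

/-- Lifting of a state-vs-distribution relation to distributions. -/
def Lift {A : Type} (R : SCSP A → Wt (SCSP A) → Prop) (Δ Θ : Wt (SCSP A)) : Prop :=
  ∃ (n : ℕ) (p : Fin n → ℝ) (s : Fin n → SCSP A) (Φ : Fin n → Wt (SCSP A)),
    (∀ i, 0 ≤ p i) ∧ (∑ i, p i = 1) ∧
    (Δ = fun t => ∑ i, p i * dirac (s i) t) ∧
    (∀ i, R (s i) (Φ i)) ∧
    (Θ = fun t => ∑ i, p i * Φ i t)

/-- The transition relation lifted to distributions. -/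
def StepD {A : Type} (α : Option A) : Wt (SCSP A) → Wt (SCSP A) → Prop :=
  Lift (fun s Δ => Step s α Δ)

/-- `s --τ̂--> Δ` : a τ-step or staying put. -/
def stepTauHat {A : Type} (s : SCSP A) (Δ : Wt (SCSP A)) : Prop :=
  Step s none Δ ∨ Δ = dirac s

/-- `==τ̂==>` : reflexive-transitive closure of the lifted `--τ̂-->`. -/
def TauStar {A : Type} : Wt (SCSP A) → Wt (SCSP A) → Prop :=
  Relation.ReflTransGen (Lift stepTauHat)

/-- `Δ ==â==> Θ` for a visible action `a`. -/
def WeakA {A : Type} (a : A) (Δ Θ : Wt (SCSP A)) : Prop :=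
  ∃ Δ₁ Δ₂, TauStar Δ Δ₁ ∧ StepD (some a) Δ₁ Δ₂ ∧ TauStar Δ₂ Θ

/-- `Δ ==α̂==> Θ`, which is `==τ̂==>` when `α = τ`. -/
def Weak {A : Type} : Option A → Wt (SCSP A) → Wt (SCSP A) → Prop
  | none => TauStar
  | some a => WeakA a

/-- `s ↛X` : the state `s` enables no action from `X ∪ {τ}`. -/
def SRefuses {A : Type} (s : SCSP A) (X : Set A) : Prop :=
  (∀ Δ, ¬ Step s none Δ) ∧ ∀ a ∈ X, ∀ Δ, ¬ Step s (some a) Δ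

/-- `Δ ↛X` : every state in the support of `Δ` refuses `X`. -/
def DRefuses {A : Type} (Δ : Wt (SCSP A)) (X : Set A) : Prop :=
  ∀ s ∈ dsupp Δ, SRefuses s X

/-! ### Simulation and failure simulation -/

/-- `R` is a simulation. -/
def IsSimulation {A : Type} (R : SCSP A → Wt (SCSP A) → Prop) : Prop :=
  ∀ s Θ α Δ, R s Θ → Step s α Δ → ∃ Θ', Weak α Θ Θ' ∧ Lift R Δ Θ'

/-- `R` is a failure simulation. -/
def IsFailureSim {A : Type} (R : SCSP A → Wt (SCSP A) → Prop) : Prop :=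
  IsSimulation R ∧
  ∀ s Θ (X : Set A), R s Θ → SRefuses s X → ∃ Θ', TauStar Θ Θ' ∧ DRefuses Θ' X

/-- `s ⊲_S Θ`. -/
def simLE {A : Type} (s : SCSP A) (Θ : Wt (SCSP A)) : Prop :=
  ∃ R, IsSimulation R ∧ R s Θ

/-- `s ⊲_FS Θ`. -/
def fsimLE {A : Type} (s : SCSP A) (Θ : Wt (SCSP A)) : Prop :=
  ∃ R, IsFailureSim R ∧ R s Θ

/-- The simulation preorder `P ⊑_S Q`. -/
def SimPre {A : Type} (P Q : PCSP A) : Prop :=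
  ∃ Θ, TauStar Q.interp Θ ∧ Lift simLE P.interp Θ

/-- The failure simulation preorder `P ⊑_FS Q`. -/
def FSimPre {A : Type} (P Q : PCSP A) : Prop :=
  ∃ Θ, TauStar P.interp Θ ∧ Lift fsimLE Q.interp Θ
/-! ### Syntactic operations: renaming, and ◻ / ∥ distributed over probabilistic choice -/

mutual
/-- Renaming of actions in a process term. -/
def mapP {A B : Type} (f : A → B) : PCSP A → PCSP B
  | .st s => .st (mapS f s)
  | .pch p P Q => .pch p (mapP f P) (mapP f Q)
def mapS {A B : Type} (f : A → B) : SCSP A → SCSP B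
  | .nil => .nil
  | .pre a P => .pre (f a) (mapP f P)
  | .ich P Q => .ich (mapP f P) (mapP f Q)
  | .ech s t => .ech (mapS f s) (mapS f t)
  | .par X s t => .par (f '' X) (mapS f s) (mapS f t)
end

/-- `s ∥_B Q` for a state `s`, distributing over probabilistic choice. -/
def parCS {A : Type} (B : Set A) (s : SCSP A) : PCSP A → PCSP A
  | .st t => .st (.par B s t)
  | .pch p Q₁ Q₂ => .pch p (parCS B s Q₁) (parCS B s Q₂)

/-- `P ∥_B Q` on processes, distributing over probabilistic choice. -/
def parC {A : Type} (B : Set A) : PCSP A → PCSP A → PCSP A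
  | .st s, Q => parCS B s Q
  | .pch p P₁ P₂, Q => .pch p (parC B P₁ Q) (parC B P₂ Q)

/-- `s ◻ Q` for a state `s`, distributing over probabilistic choice. -/
def echCS {A : Type} (s : SCSP A) : PCSP A → PCSP A
  | .st t => .st (.ech s t)
  | .pch p Q₁ Q₂ => .pch p (echCS s Q₁) (echCS s Q₂)

/-- `P ◻ Q` on processes, distributing over probabilistic choice. -/
def echC {A : Type} : PCSP A → PCSP A → PCSP A
  | .st s, Q => echCS s Q
  | .pch p P₁ P₂, Q => .pch p (echC P₁ Q) (echC P₂ Q)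

/-- Finite (nonempty) indexed internal choice `⨅_{i} P i`. -/
def ichFin {A : Type} : (n : ℕ) → (Fin (n+1) → PCSP A) → PCSP A
  | 0, P => P 0
  | n+1, P => .st (.ich (P 0) (ichFin n (fun i => P i.succ)))

/-- Finite (nonempty) indexed probabilistic choice `⊕_{i} p i · P i`. -/
def pchFin {A : Type} : (n : ℕ) → (Fin (n+1) → ℝ) → (Fin (n+1) → PCSP A) → PCSP A
  | 0, _, P => P 0
  | n+1, p, P => .pch (p 0) (P 0)
      (pchFin n (fun i => p i.succ / (1 - p 0)) (fun i => P i.succ))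

/-- Finite (nonempty) indexed external choice of states `◻_{i} s i`. -/
def echFin {A : Type} : (n : ℕ) → (Fin (n+1) → SCSP A) → SCSP A
  | 0, s => s 0
  | n+1, s => .ech (s 0) (echFin n (fun i => s i.succ))

/-- External choice of a list of states (empty list gives `0`). -/
def echList {A : Type} : List (SCSP A) → SCSP A
  | [] => .nil
  | s :: l => .ech s (echList l)

/-! ### State-based scalar testing -/

/-- The alphabet `Act ∪ {ω}` for ordinary (scalar) tests. -/
abbrev TAct (A : Type) := Sum A Unit

/-- The success action ω. -/
def omA {A : Type} : TAct A := Sum.inr ()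

/-- Membership in the state-based results-gathering function `V` (with success action `w`). -/
inductive VMem {B : Type} (w : B) : SCSP B → ℝ → Prop where
  | succ {s : SCSP B} {Δ} : Step s (some w) Δ → VMem w s 1
  | step {s : SCSP B} {α : Option B} {Δ} (f : SCSP B → ℝ) :
      (∀ Θ, ¬ Step s (some w) Θ) → Step s α Δ →
      (∀ t ∈ dsupp Δ, VMem w t (f t)) → VMem w s (dexp Δ f)
  | stuck {s : SCSP B} : (∀ α Δ, ¬ Step s α Δ) → VMem w s 0

/-- `V(Δ)` : the set of outcomes of a distribution, via choice functions. -/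
def VD {B : Type} (w : B) (Δ : Wt (SCSP B)) : Set ℝ :=
  {r | ∃ f : SCSP B → ℝ, (∀ t ∈ dsupp Δ, VMem w t (f t)) ∧ r = dexp Δ f}

/-- The application `T ∥_Act P` of a test to a process. -/
def applyTest {A : Type} (T : PCSP (TAct A)) (P : PCSP A) : PCSP (TAct A) :=
  parC (Set.range Sum.inl) T (mapP Sum.inl P)

/-- `A(T,P)` : state-based testing outcomes. -/
def Aset {A : Type} (T : PCSP (TAct A)) (P : PCSP A) : Set ℝ :=
  VD omA (applyTest T P).interp

/-- The Hoare preorder on sets of reals. -/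
def HoareLE (X Y : Set ℝ) : Prop := ∀ x ∈ X, ∃ y ∈ Y, x ≤ y

/-- The Smyth preorder on sets of reals. -/
def SmythLE (X Y : Set ℝ) : Prop := ∀ y ∈ Y, ∃ x ∈ X, x ≤ y

/-- The may-testing preorder `⊑_pmay`. -/
def PMay {A : Type} (P Q : PCSP A) : Prop :=
  ∀ T : PCSP (TAct A), PWF T → HoareLE (Aset T P) (Aset T Q)

/-- The must-testing preorder `⊑_pmust`. -/
def PMust {A : Type} (P Q : PCSP A) : Prop :=
  ∀ T : PCSP (TAct A), PWF T → SmythLE (Aset T P) (Aset T Q)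

/-! ### Action-based scalar testing -/

/-- Membership in the action-based results-gathering function `V̄`. -/
inductive VBarMem {B : Type} (w : B) : SCSP B → ℝ → Prop where
  | succ {s : SCSP B} {Δ} : Step s (some w) Δ → VBarMem w s 1
  | step {s : SCSP B} {α : Option B} {Δ} (f : SCSP B → ℝ) :
      α ≠ some w → Step s α Δ →
      (∀ t ∈ dsupp Δ, VBarMem w t (f t)) → VBarMem w s (dexp Δ f)
  | stuck {s : SCSP B} : (∀ α Δ, ¬ Step s α Δ) → VBarMem w s 0

/-- `V̄(Δ)`. -/
def VBarD {B : Type} (w : B) (Δ : Wt (SCSP B)) : Set ℝ :=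
  {r | ∃ f : SCSP B → ℝ, (∀ t ∈ dsupp Δ, VBarMem w t (f t)) ∧ r = dexp Δ f}

/-- `Ā(T,P)` : action-based testing outcomes. -/
def AsetBar {A : Type} (T : PCSP (TAct A)) (P : PCSP A) : Set ℝ :=
  VBarD omA (applyTest T P).interp

/-- The action-based may-testing preorder `⊑̄_pmay`. -/
def PMayBar {A : Type} (P Q : PCSP A) : Prop :=
  ∀ T : PCSP (TAct A), PWF T → HoareLE (AsetBar T P) (AsetBar T Q)

/-- The action-based must-testing preorder `⊑̄_pmust`. -/
def PMustBar {A : Type} (P Q : PCSP A) : Prop :=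
  ∀ T : PCSP (TAct A), PWF T → SmythLE (AsetBar T P) (AsetBar T Q)
/-! ### ω-avoiding transitions and the relation ⊲ᵉ_FS -/

/-- `s --α-->_ω Δ` : a transition from a state not enabling the success action `w`. -/
def StepOmega {B : Type} (w : B) (s : SCSP B) (α : Option B) (Δ : Wt (SCSP B)) : Prop :=
  (∀ Θ, ¬ Step s (some w) Θ) ∧ Step s α Δ

/-- `s --τ̂-->_ω Δ`. -/
def stepTauHatOm {B : Type} (w : B) (s : SCSP B) (Δ : Wt (SCSP B)) : Prop :=
  StepOmega w s none Δ ∨ Δ = dirac s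

/-- `==τ̂==>_ω`. -/
def TauStarOm {B : Type} (w : B) : Wt (SCSP B) → Wt (SCSP B) → Prop :=
  Relation.ReflTransGen (Lift (stepTauHatOm w))

/-- `==â==>_ω` for a visible action `a`. -/
def WeakAOm {B : Type} (w : B) (a : B) (Δ Θ : Wt (SCSP B)) : Prop :=
  ∃ Δ₁ Δ₂, TauStarOm w Δ Δ₁ ∧
    Lift (fun s Φ => StepOmega w s (some a) Φ) Δ₁ Δ₂ ∧ TauStarOm w Δ₂ Θ

/-- `==α̂==>_ω`. -/
def WeakOm {B : Type} (w : B) : Option B → Wt (SCSP B) → Wt (SCSP B) → Prop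
  | none => TauStarOm w
  | some a => WeakAOm w a

/-- A postfixed point for the coinductive definition of `⊲ᵉ_FS`. -/
def IsEFailSim {B : Type} (w : B) (R : SCSP B → Wt (SCSP B) → Prop) : Prop :=
  (∀ s Θ α Δ, R s Θ → StepOmega w s α Δ → ∃ Θ', WeakOm w α Θ Θ' ∧ Lift R Δ Θ') ∧
  (∀ s Θ (X : Set B), R s Θ → w ∈ X → SRefuses s X →
    ∃ Θ', TauStarOm w Θ Θ' ∧ DRefuses Θ' X)

/-- `s ⊲ᵉ_FS Θ` : the largest relation satisfying the transfer properties. -/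
def efsimLE {B : Type} (w : B) (s : SCSP B) (Θ : Wt (SCSP B)) : Prop :=
  ∃ R, IsEFailSim w R ∧ R s Θ

/-! ### Vector-based testing with success actions from Ω -/

/-- `α!o` : update the `α`-component of the outcome tuple to 1 if `α` is a success action. -/
def bang {A Om : Type} (α : Option (Sum A Om)) (o : Om → ℝ) : Om → ℝ :=
  fun w => if α = some (Sum.inr w) then 1 else o w

mutual
/-- Membership in the vector-based convex-closed results-gathering function `V̄↕^Ω`
for states.  -/
inductive WMem : {A Om : Type} → SCSP (Sum A Om) → (Om → ℝ) → Prop where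
  | stuck {A Om : Type} {s : SCSP (Sum A Om)} :
      (∀ α Δ, ¬ Step s α Δ) → WMem s (fun _ => 0)
  | step {A Om : Type} {s : SCSP (Sum A Om)} {n : ℕ}
      (p : Fin (n+1) → ℝ) (α : Fin (n+1) → Option (Sum A Om))
      (Δ : Fin (n+1) → Wt (SCSP (Sum A Om))) (o : Fin (n+1) → Om → ℝ) :
      (∀ i, 0 ≤ p i) → (∑ i, p i = 1) →
      (∀ i, Step s (α i) (Δ i)) →
      (∀ i, WMemD (Δ i) (o i)) →
      WMem s (fun w => ∑ i, p i * bang (α i) (o i) w)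
/-- Membership in `V̄↕^Ω` for distributions. -/
inductive WMemD : {A Om : Type} → Wt (SCSP (Sum A Om)) → (Om → ℝ) → Prop where
  | mk {A Om : Type} {Δ : Wt (SCSP (Sum A Om))} (f : SCSP (Sum A Om) → Om → ℝ) :
      (∀ t ∈ dsupp Δ, WMem t (f t)) → WMemD Δ (fun w => ∑ᶠ t, Δ t * f t w)
end

/-- `V̄↕^Ω(Δ)` as a set of outcome tuples. -/
def WsetD {A Om : Type} (Δ : Wt (SCSP (Sum A Om))) : Set (Om → ℝ) :=
  {o | WMemD Δ o}

/-- The application `T ∥_Act P` of an Ω-test to a process. -/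
def applyTestO {A Om : Type} (T : PCSP (Sum A Om)) (P : PCSP A) : PCSP (Sum A Om) :=
  parC (Set.range Sum.inl) T (mapP Sum.inl P)

/-- `A↕^Ω(T,P)` : vector-based testing outcomes of a process. -/
def AO {A Om : Type} (T : PCSP (Sum A Om)) (P : PCSP A) : Set (Om → ℝ) :=
  WsetD (applyTestO T P).interp

/-- `A↕^Ω(T,Δ)` for a distribution `Δ ∈ D(sCSP)`, via expected values. -/
def AOD {A Om : Type} (T : PCSP (Sum A Om)) (Δ : Wt (SCSP A)) : Set (Om → ℝ) :=
  {o | ∃ g : SCSP A → Om → ℝ,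
    (∀ s ∈ dsupp Δ, g s ∈ AO T (.st s)) ∧ o = fun w => ∑ᶠ s, Δ s * g s w}

/-- Hoare preorder on sets of outcome tuples (componentwise order). -/
def HoareLEV {Om : Type} (X Y : Set (Om → ℝ)) : Prop := ∀ x ∈ X, ∃ y ∈ Y, x ≤ y

/-- Smyth preorder on sets of outcome tuples (componentwise order). -/
def SmythLEV {Om : Type} (X Y : Set (Om → ℝ)) : Prop := ∀ y ∈ Y, ∃ x ∈ X, x ≤ y

/-- The vector-based may-testing preorder `⊑̄^Ω_pmay`. -/
def PMayO {A : Type} (Om : Type) (P Q : PCSP A) : Prop :=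
  ∀ T : PCSP (Sum A Om), PWF T → HoareLEV (AO T P) (AO T Q)

/-- The vector-based must-testing preorder `⊑̄^Ω_pmust`. -/
def PMustO {A : Type} (Om : Type) (P Q : PCSP A) : Prop :=
  ∀ T : PCSP (Sum A Om), PWF T → SmythLEV (AO T P) (AO T Q)

/-- The unit outcome vector `ω⃗`. -/
def unitVec {Om : Type} (w : Om) : Om → ℝ := fun w' => if w' = w then 1 else 0

/-! Occurrence of an action in a process term. -/
mutual
/-- Occurrence of an action in a process term. -/
inductive PUses : {B : Type} → B → PCSP B → Prop where
  | st {B : Type} {b : B} {s} : SUses b s → PUses b (.st s)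
  | pchL {B : Type} {b : B} {p P Q} : PUses b P → PUses b (.pch p P Q)
  | pchR {B : Type} {b : B} {p P Q} : PUses b Q → PUses b (.pch p P Q)
inductive SUses : {B : Type} → B → SCSP B → Prop where
  | preAct {B : Type} {b : B} {P} : SUses b (.pre b P)
  | pre {B : Type} {b : B} {a P} : PUses b P → SUses b (.pre a P)
  | ichL {B : Type} {b : B} {P Q} : PUses b P → SUses b (.ich P Q)
  | ichR {B : Type} {b : B} {P Q} : PUses b Q → SUses b (.ich P Q)
  | echL {B : Type} {b : B} {s t} : SUses b s → SUses b (.ech s t)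
  | echR {B : Type} {b : B} {s t} : SUses b t → SUses b (.ech s t)
  | parSet {B : Type} {b : B} {X s t} : b ∈ X → SUses b (.par X s t)
  | parL {B : Type} {b : B} {X s t} : SUses b s → SUses b (.par X s t)
  | parR {B : Type} {b : B} {X s t} : SUses b t → SUses b (.par X s t)
end
/-! ### The modal logic F -/

/-- Modal formulae of the logic `F`. -/
inductive Form (A : Type) : Type where
  | ref : Set A → Form A
  | dia : A → Form A → Form A
  | conj : (n : ℕ) → (Fin n → Form A) → Form A
  | prob : (n : ℕ) → (Fin n → ℝ) → (Fin n → Form A) → Form A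

/-- Well-formed formulae: probabilistic choices carry genuine distributions. -/
inductive WFF {A : Type} : Form A → Prop where
  | ref {X} : WFF (.ref X)
  | dia {a φ} : WFF φ → WFF (.dia a φ)
  | conj {n φs} : (∀ i, WFF (φs i)) → WFF (.conj n φs)
  | prob {n p φs} : (∀ i, 0 ≤ p i) → (∑ i, p i = 1) →
      (∀ i, WFF (φs i)) → WFF (.prob n p φs)

/-- Formulae of the sublogic `L`: no refusal construct. -/
inductive NoRef {A : Type} : Form A → Prop where
  | dia {a φ} : NoRef φ → NoRef (.dia a φ)
  | conj {n φs} : (∀ i, NoRef (φs i)) → NoRef (.conj n φs)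
  | prob {n p φs} : (∀ i, NoRef (φs i)) → NoRef (.prob n p φs)

/-- The satisfaction relation `Δ ⊨ φ`. -/
inductive Sat {A : Type} : Form A → Wt (SCSP A) → Prop where
  | ref {X : Set A} {Δ Δ'} : TauStar Δ Δ' → DRefuses Δ' X → Sat (.ref X) Δ
  | dia {a φ Δ Δ'} : WeakA a Δ Δ' → Sat φ Δ' → Sat (.dia a φ) Δ
  | conj {n φs Δ} : (∀ i, Sat (φs i) Δ) → Sat (.conj n φs) Δ
  | prob {n} {p : Fin n → ℝ} {φs Δ} (Δs : Fin n → Wt (SCSP A)) :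
      (∀ i, Sat (φs i) (Δs i)) →
      TauStar Δ (fun t => ∑ i, p i * Δs i t) →
      Sat (.prob n p φs) Δ

/-- The logical preorder `⊑^L`. -/
def LPre {A : Type} (P Q : PCSP A) : Prop :=
  ∀ φ : Form A, WFF φ → NoRef φ → Sat φ P.interp → Sat φ Q.interp

/-- The logical preorder `⊑^F`. -/
def FPre {A : Type} (P Q : PCSP A) : Prop :=
  ∀ φ : Form A, WFF φ → Sat φ Q.interp → Sat φ P.interp

mutual
/-- `CharS s φ` : `φ` is an F-characteristic formula `φ_s` of the state `s`. -/
inductive CharS : {A : Type} → SCSP A → Form A → Prop where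
  | noTau {A : Type} {s : SCSP A} (n : ℕ) (a : Fin n → A)
      (Δ : Fin n → Wt (SCSP A)) (φ : Fin n → Form A) :
      (∀ Θ, ¬ Step s none Θ) →
      (∀ i, Step s (some (a i)) (Δ i)) →
      (∀ b Θ, Step s (some b) Θ → ∃ i, a i = b ∧ Δ i = Θ) →
      (∀ i, CharD (Δ i) (φ i)) →
      CharS s (.conj (n+1) (Fin.snoc (fun i => .dia (a i) (φ i))
        (.ref {b : A | ∀ Θ, ¬ Step s (some b) Θ})))
  | tau {A : Type} {s : SCSP A} (n m : ℕ) (a : Fin n → A)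
      (Δ : Fin n → Wt (SCSP A)) (φ : Fin n → Form A)
      (Θs : Fin m → Wt (SCSP A)) (ψ : Fin m → Form A) :
      (∃ Θ, Step s none Θ) →
      (∀ i, Step s (some (a i)) (Δ i)) →
      (∀ b Θ, Step s (some b) Θ → ∃ i, a i = b ∧ Δ i = Θ) →
      (∀ j, Step s none (Θs j)) →
      (∀ Θ, Step s none Θ → ∃ j, Θs j = Θ) →
      (∀ i, CharD (Δ i) (φ i)) →
      (∀ j, CharD (Θs j) (ψ j)) →
      CharS s (.conj (n+m) (Fin.append (fun i => .dia (a i) (φ i)) ψ))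
/-- `CharD Δ φ` : `φ` is an F-characteristic formula `φ_Δ` of the distribution `Δ`. -/
inductive CharD : {A : Type} → Wt (SCSP A) → Form A → Prop where
  | mk {A : Type} {Δ : Wt (SCSP A)} (n : ℕ) (s : Fin n → SCSP A) (φ : Fin n → Form A) :
      Function.Injective s →
      (∀ i, s i ∈ dsupp Δ) →
      (∀ t ∈ dsupp Δ, ∃ i, s i = t) →
      (∀ i, CharS (s i) (φ i)) →
      CharD Δ (.prob n (fun i => Δ (s i)) φ)
end

mutual
/-- `CharSL s ψ` : `ψ` is an L-characteristic formula `ψ_s` of the state `s`. -/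
inductive CharSL : {A : Type} → SCSP A → Form A → Prop where
  | noTau {A : Type} {s : SCSP A} (n : ℕ) (a : Fin n → A)
      (Δ : Fin n → Wt (SCSP A)) (φ : Fin n → Form A) :
      (∀ Θ, ¬ Step s none Θ) →
      (∀ i, Step s (some (a i)) (Δ i)) →
      (∀ b Θ, Step s (some b) Θ → ∃ i, a i = b ∧ Δ i = Θ) →
      (∀ i, CharDL (Δ i) (φ i)) →
      CharSL s (.conj n (fun i => .dia (a i) (φ i)))
  | tau {A : Type} {s : SCSP A} (n m : ℕ) (a : Fin n → A)
      (Δ : Fin n → Wt (SCSP A)) (φ : Fin n → Form A)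
      (Θs : Fin m → Wt (SCSP A)) (ψ : Fin m → Form A) :
      (∃ Θ, Step s none Θ) →
      (∀ i, Step s (some (a i)) (Δ i)) →
      (∀ b Θ, Step s (some b) Θ → ∃ i, a i = b ∧ Δ i = Θ) →
      (∀ j, Step s none (Θs j)) →
      (∀ Θ, Step s none Θ → ∃ j, Θs j = Θ) →
      (∀ i, CharDL (Δ i) (φ i)) →
      (∀ j, CharDL (Θs j) (ψ j)) →
      CharSL s (.conj (n+m) (Fin.append (fun i => .dia (a i) (φ i)) ψ))
/-- `CharDL Δ ψ` : `ψ` is an L-characteristic formula `ψ_Δ` of the distribution `Δ`. -/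
inductive CharDL : {A : Type} → Wt (SCSP A) → Form A → Prop where
  | mk {A : Type} {Δ : Wt (SCSP A)} (n : ℕ) (s : Fin n → SCSP A) (φ : Fin n → Form A) :
      Function.Injective s →
      (∀ i, s i ∈ dsupp Δ) →
      (∀ t ∈ dsupp Δ, ∃ i, s i = t) →
      (∀ i, CharSL (s i) (φ i)) →
      CharDL Δ (.prob n (fun i => Δ (s i)) φ)
end
/-! ### The sub-language nCSP and (in)equational theories -/

mutual
/-- Membership in `nCSP`: no parallel composition. -/
inductive PNoPar : {A : Type} → PCSP A → Prop where
  | st {A : Type} {s : SCSP A} : SNoPar s → PNoPar (.st s)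
  | pch {A : Type} {p : ℝ} {P Q : PCSP A} : PNoPar P → PNoPar Q → PNoPar (.pch p P Q)
inductive SNoPar : {A : Type} → SCSP A → Prop where
  | nil {A : Type} : SNoPar (SCSP.nil (A := A))
  | pre {A : Type} {a : A} {P} : PNoPar P → SNoPar (.pre a P)
  | ich {A : Type} {P Q : PCSP A} : PNoPar P → PNoPar Q → SNoPar (.ich P Q)
  | ech {A : Type} {s t : SCSP A} : SNoPar s → SNoPar t → SNoPar (.ech s t)
end

/-- Initial actions of a state-based term (`none` denotes τ). -/
def initsS {A : Type} : SCSP A → Set (Option A)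
  | .nil => ∅
  | .pre a _ => {some a}
  | .ich _ _ => {none}
  | .ech s t => initsS s ∪ initsS t
  | .par _ s t => initsS s ∪ initsS t

/-- Initial actions of a process term. -/
def initsP {A : Type} : PCSP A → Set (Option A)
  | .st s => initsS s
  | .pch _ P Q => initsP P ∪ initsP Q

/-- Derivability in the equational theory `=_E` of Figure 3. -/
inductive EqE {A : Type} : PCSP A → PCSP A → Prop where
  | refl (P) : EqE P P
  | symm {P Q} : EqE P Q → EqE Q P
  | trans {P Q R} : EqE P Q → EqE Q R → EqE P R
  | congPre (a : A) {P Q} : EqE P Q → EqE (.st (.pre a P)) (.st (.pre a Q))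
  | congIch {P₁ P₂ Q₁ Q₂} : EqE P₁ Q₁ → EqE P₂ Q₂ →
      EqE (.st (.ich P₁ P₂)) (.st (.ich Q₁ Q₂))
  | congEch {P₁ P₂ Q₁ Q₂} : EqE P₁ Q₁ → EqE P₂ Q₂ →
      EqE (echC P₁ P₂) (echC Q₁ Q₂)
  | congPch (p : ℝ) {P₁ P₂ Q₁ Q₂} : EqE P₁ Q₁ → EqE P₂ Q₂ →
      EqE (.pch p P₁ P₂) (.pch p Q₁ Q₂)
  | P1 (p : ℝ) (h₀ : 0 < p) (h₁ : p < 1) (P) : EqE (.pch p P P) P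
  | P2 (p : ℝ) (h₀ : 0 < p) (h₁ : p < 1) (P Q) :
      EqE (.pch p P Q) (.pch (1-p) Q P)
  | P3 (p q : ℝ) (hp₀ : 0 < p) (hp₁ : p < 1) (hq₀ : 0 < q) (hq₁ : q < 1) (P Q R) :
      EqE (.pch q (.pch p P Q) R)
          (.pch (p*q) P (.pch ((1-p)*q/(1-p*q)) Q R))
  | I1 (P) : EqE (.st (.ich P P)) P
  | I2 (P Q) : EqE (.st (.ich P Q)) (.st (.ich Q P))
  | I3 (P Q R) : EqE (.st (.ich (.st (.ich P Q)) R)) (.st (.ich P (.st (.ich Q R))))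
  | E1 (P) : EqE (echC P (.st .nil)) P
  | E2 (P Q) : EqE (echC P Q) (echC Q P)
  | E3 (P Q R) : EqE (echC (echC P Q) R) (echC P (echC Q R))
  | EI (a : A) (P Q) :
      EqE (echC (.st (.pre a P)) (.st (.pre a Q)))
          (.st (.ich (.st (.pre a P)) (.st (.pre a Q))))
  | D1 (p : ℝ) (h₀ : 0 < p) (h₁ : p < 1) (P Q R) :
      EqE (echC P (.pch p Q R)) (.pch p (echC P Q) (echC P R))
  | D2 (a : A) (P Q R) :
      EqE (echC (.st (.pre a P)) (.st (.ich Q R)))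
          (.st (.ich (echC (.st (.pre a P)) Q) (echC (.st (.pre a P)) R)))
  | D3 (P₁ P₂ Q₁ Q₂) :
      EqE (echC (.st (.ich P₁ P₂)) (.st (.ich Q₁ Q₂)))
          (.st (.ich
            (.st (.ich (echC P₁ (.st (.ich Q₁ Q₂))) (echC P₂ (.st (.ich Q₁ Q₂)))))
            (.st (.ich (echC (.st (.ich P₁ P₂)) Q₁) (echC (.st (.ich P₁ P₂)) Q₂)))))

/-- Derivability from the probabilistic axioms P1–P3 and D1 only (`=_prob`). -/
inductive EqProb {A : Type} : PCSP A → PCSP A → Prop where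
  | refl (P) : EqProb P P
  | symm {P Q} : EqProb P Q → EqProb Q P
  | trans {P Q R} : EqProb P Q → EqProb Q R → EqProb P R
  | congPre (a : A) {P Q} : EqProb P Q → EqProb (.st (.pre a P)) (.st (.pre a Q))
  | congIch {P₁ P₂ Q₁ Q₂} : EqProb P₁ Q₁ → EqProb P₂ Q₂ →
      EqProb (.st (.ich P₁ P₂)) (.st (.ich Q₁ Q₂))
  | congEch {P₁ P₂ Q₁ Q₂} : EqProb P₁ Q₁ → EqProb P₂ Q₂ →
      EqProb (echC P₁ P₂) (echC Q₁ Q₂)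
  | congPch (p : ℝ) {P₁ P₂ Q₁ Q₂} : EqProb P₁ Q₁ → EqProb P₂ Q₂ →
      EqProb (.pch p P₁ P₂) (.pch p Q₁ Q₂)
  | P1 (p : ℝ) (h₀ : 0 < p) (h₁ : p < 1) (P) : EqProb (.pch p P P) P
  | P2 (p : ℝ) (h₀ : 0 < p) (h₁ : p < 1) (P Q) :
      EqProb (.pch p P Q) (.pch (1-p) Q P)
  | P3 (p q : ℝ) (hp₀ : 0 < p) (hp₁ : p < 1) (hq₀ : 0 < q) (hq₁ : q < 1) (P Q R) :
      EqProb (.pch q (.pch p P Q) R)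
          (.pch (p*q) P (.pch ((1-p)*q/(1-p*q)) Q R))
  | D1 (p : ℝ) (h₀ : 0 < p) (h₁ : p < 1) (P Q R) :
      EqProb (echC P (.pch p Q R)) (.pch p (echC P Q) (echC P R))

mutual
/-- Normal forms. -/
inductive IsNF : {A : Type} → PCSP A → Prop where
  | pch {A : Type} {p : ℝ} {N₁ N₂ : PCSP A} : 0 < p → p < 1 →
      IsNF N₁ → IsNF N₂ → IsNF (.pch p N₁ N₂)
  | ich {A : Type} {N₁ N₂ : PCSP A} : IsNF N₁ → IsNF N₂ → IsNF (.st (.ich N₁ N₂))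
  | ext {A : Type} {s : SCSP A} : IsExtNF s → IsNF (.st s)
/-- External-choice normal forms `◻_{i∈I} a_i.N_i`. -/
inductive IsExtNF : {A : Type} → SCSP A → Prop where
  | nil {A : Type} : IsExtNF (SCSP.nil (A := A))
  | pre {A : Type} {a : A} {N} : IsNF N → IsExtNF (.pre a N)
  | ech {A : Type} {s t : SCSP A} : IsExtNF s → IsExtNF t → IsExtNF (.ech s t)
end

/-- Derivability in the inequational theory for may testing (`⊑_Emay`). -/
inductive LeMay {A : Type} : PCSP A → PCSP A → Prop where
  | ofEq {P Q} : EqE P Q → LeMay P Q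
  | trans {P Q R} : LeMay P Q → LeMay Q R → LeMay P R
  | congPre (a : A) {P Q} : LeMay P Q → LeMay (.st (.pre a P)) (.st (.pre a Q))
  | congIch {P₁ P₂ Q₁ Q₂} : LeMay P₁ Q₁ → LeMay P₂ Q₂ →
      LeMay (.st (.ich P₁ P₂)) (.st (.ich Q₁ Q₂))
  | congEch {P₁ P₂ Q₁ Q₂} : LeMay P₁ Q₁ → LeMay P₂ Q₂ →
      LeMay (echC P₁ P₂) (echC Q₁ Q₂)
  | congPch (p : ℝ) {P₁ P₂ Q₁ Q₂} : LeMay P₁ Q₁ → LeMay P₂ Q₂ →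
      LeMay (.pch p P₁ P₂) (.pch p Q₁ Q₂)
  | may0 (a b : A) (P Q) :
      LeMay (echC (.st (.pre a P)) (.st (.pre b Q)))
            (.st (.ich (.st (.pre a P)) (.st (.pre b Q))))
  | may0' (a b : A) (P Q) :
      LeMay (.st (.ich (.st (.pre a P)) (.st (.pre b Q))))
            (echC (.st (.pre a P)) (.st (.pre b Q)))
  | may1 (P Q) : LeMay P (.st (.ich P Q))
  | may2 (P) : LeMay (.st .nil) P
  | may3 (a : A) (p : ℝ) (h₀ : 0 < p) (h₁ : p < 1) (P Q) :
      LeMay (.st (.pre a (.pch p P Q))) (.pch p (.st (.pre a P)) (.st (.pre a Q)))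

/-- Derivability in the inequational theory for must testing (`⊑_Emust`). -/
inductive LeMust {A : Type} : PCSP A → PCSP A → Prop where
  | ofEq {P Q} : EqE P Q → LeMust P Q
  | trans {P Q R} : LeMust P Q → LeMust Q R → LeMust P R
  | congPre (a : A) {P Q} : LeMust P Q → LeMust (.st (.pre a P)) (.st (.pre a Q))
  | congIch {P₁ P₂ Q₁ Q₂} : LeMust P₁ Q₁ → LeMust P₂ Q₂ →
      LeMust (.st (.ich P₁ P₂)) (.st (.ich Q₁ Q₂))
  | congEch {P₁ P₂ Q₁ Q₂} : LeMust P₁ Q₁ → LeMust P₂ Q₂ →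
      LeMust (echC P₁ P₂) (echC Q₁ Q₂)
  | congPch (p : ℝ) {P₁ P₂ Q₁ Q₂} : LeMust P₁ Q₁ → LeMust P₂ Q₂ →
      LeMust (.pch p P₁ P₂) (.pch p Q₁ Q₂)
  | must1 (P Q) : LeMust (.st (.ich P Q)) Q
  | must2 (n : ℕ) (a : Fin (n+1) → A) (m : Fin (n+1) → ℕ)
      (p : (i : Fin (n+1)) → Fin (m i + 1) → ℝ)
      (Q : (i : Fin (n+1)) → Fin (m i + 1) → PCSP A)
      (P : (i : Fin (n+1)) → Fin (m i + 1) → PCSP A)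
      (R : PCSP A) :
      (∀ i j, 0 ≤ p i j) → (∀ i, ∑ j, p i j = 1) →
      initsP R ⊆ {α | ∃ i, α = some (a i)} →
      LeMust
        (.st (.ich R (ichFin n (fun i =>
          pchFin (m i) (p i) (fun j => echC (.st (.pre (a i) (Q i j))) (P i j))))))
        (.st (echFin n (fun i => .pre (a i) (pchFin (m i) (p i) (Q i)))))

/-! #### Auxiliary development for the derivative lemma -/

section DerivativeAux
variable {A : Type}

lemma LeMay.rfl (P : PCSP A) : LeMay P P := .ofEq (.refl P)
lemma LeMust.rfl (P : PCSP A) : LeMust P P := .ofEq (.refl P)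

@[simp] lemma interp_st (s : SCSP A) : (PCSP.st s).interp = dirac s := rfl
@[simp] lemma interp_pch (p : ℝ) (P Q : PCSP A) :
    (PCSP.pch p P Q).interp = fun t => p * P.interp t + (1-p) * Q.interp t := rfl

lemma dirac_nonneg (s t : SCSP A) : 0 ≤ dirac s t := by
  unfold dirac; split <;> norm_num

@[simp] lemma dirac_self (s : SCSP A) : dirac s s = 1 := by simp [dirac]

lemma interp_nonneg : ∀ {P : PCSP A}, PWF P → ∀ t, 0 ≤ P.interp t
  | .st s, _, t => dirac_nonneg s t
  | .pch p P Q, h, t => by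
      cases h with
      | pch h0 h1 hP hQ =>
        have hp := interp_nonneg hP t
        have hq := interp_nonneg hQ t
        simp only [interp_pch]
        nlinarith

lemma dsupp_interp_finite : ∀ (P : PCSP A), (dsupp P.interp).Finite
  | .st s => Set.Finite.subset (Set.finite_singleton s) (by
      intro t ht
      simp only [dsupp, Function.mem_support, interp_st, dirac] at ht
      by_contra hne
      simp only [Set.mem_singleton_iff] at hne
      exact ht (if_neg hne))
  | .pch p P Q => by
      have h1 := dsupp_interp_finite P
      have h2 := dsupp_interp_finite Q
      refine Set.Finite.subset (h1.union h2) ?_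
      intro t ht
      simp only [dsupp, Function.mem_support, interp_pch] at ht
      by_contra hn
      simp only [Set.mem_union, dsupp, Function.mem_support, not_or, not_not] at hn
      rw [hn.1, hn.2] at ht; simp at ht

lemma supp_pch_cases {p : ℝ} {P Q : PCSP A} {t : SCSP A}
    (ht : t ∈ dsupp (PCSP.pch p P Q).interp) :
    t ∈ dsupp P.interp ∨ t ∈ dsupp Q.interp := by
  simp only [dsupp, Function.mem_support, interp_pch] at ht ⊢
  by_contra hn
  simp only [not_or, not_not] at hn
  rw [hn.1, hn.2] at ht; simp at ht

lemma supp_SWF : ∀ {P : PCSP A}, PWF P → ∀ {t}, t ∈ dsupp P.interp → SWF t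
  | .st s, h, t, ht => by
      simp only [dsupp, Function.mem_support, interp_st, dirac] at ht
      have : t = s := by by_contra hne; exact ht (if_neg hne)
      subst this
      cases h with | st hs => exact hs
  | .pch p P Q, h, t, ht => by
      cases h with
      | pch h0 h1 hP hQ =>
        rcases supp_pch_cases ht with h' | h'
        · exact supp_SWF hP h'
        · exact supp_SWF hQ h'

lemma supp_SNoPar : ∀ {P : PCSP A}, PNoPar P → ∀ {t}, t ∈ dsupp P.interp → SNoPar t
  | .st s, h, t, ht => by
      simp only [dsupp, Function.mem_support, interp_st, dirac] at ht
      have : t = s := by by_contra hne; exact ht (if_neg hne)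
      subst this
      cases h with | st hs => exact hs
  | .pch p P Q, h, t, ht => by
      cases h with
      | pch hP hQ =>
        rcases supp_pch_cases ht with h' | h'
        · exact supp_SNoPar hP h'
        · exact supp_SNoPar hQ h'

lemma interp_sum_finset : ∀ {P : PCSP A}, PWF P → ∀ {S : Finset (SCSP A)},
    dsupp P.interp ⊆ ↑S → ∑ t ∈ S, P.interp t = 1
  | .st s, _, S, hS => by
      have hs : s ∈ S := hS (by simp [dsupp, Function.mem_support])
      simp only [interp_st, dirac]
      rw [Finset.sum_ite_eq' S s (fun _ => (1:ℝ))]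
      simp [hs]
  | .pch p P Q, h, S, hS => by
      cases h with
      | pch h0 h1 hP hQ =>
        have hPS : dsupp P.interp ⊆ ↑S := by
          intro t ht
          refine hS ?_
          simp only [dsupp, Function.mem_support, interp_pch]
          have h2 := interp_nonneg hP t
          have h3 := interp_nonneg hQ t
          simp only [dsupp, Function.mem_support] at ht
          intro hc
          have : p * P.interp t = 0 := by nlinarith
          have : P.interp t = 0 := by
            rcases mul_eq_zero.1 this with h' | h'
            · exact absurd h' (ne_of_gt h0)
            · exact h'
          exact ht this
        have hQS : dsupp Q.interp ⊆ ↑S := by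
          intro t ht
          refine hS ?_
          simp only [dsupp, Function.mem_support, interp_pch]
          have h2 := interp_nonneg hP t
          have h3 := interp_nonneg hQ t
          simp only [dsupp, Function.mem_support] at ht
          intro hc
          have : (1-p) * Q.interp t = 0 := by nlinarith
          have : Q.interp t = 0 := by
            rcases mul_eq_zero.1 this with h' | h'
            · exact absurd h' (by linarith)
            · exact h'
          exact ht this
        simp only [interp_pch]
        rw [Finset.sum_add_distrib, ← Finset.mul_sum, ← Finset.mul_sum,
          interp_sum_finset hP hPS, interp_sum_finset hQ hQS]
        ring

/-! dmap computation lemmas -/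

lemma dmap_eq_sum {Δ : Wt (SCSP A)} (g : SCSP A → SCSP A) {S : Finset (SCSP A)}
    (hS : dsupp Δ ⊆ ↑S) (y : SCSP A) :
    dmap g Δ y = ∑ x ∈ S, if g x = y then Δ x else 0 := by
  unfold dmap
  rw [finsum_mem_def]
  have hsupp : Function.support (Set.indicator {x | g x = y} Δ) ⊆ ↑S := by
    intro x hx
    refine hS ?_
    simp only [Function.mem_support, Set.indicator_apply] at hx
    simp only [dsupp, Function.mem_support]
    intro hc; apply hx; split <;> simp [hc]
  rw [finsum_eq_finset_sum_of_support_subset _ hsupp]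
  refine Finset.sum_congr rfl fun x _ => ?_
  simp [Set.indicator_apply, Set.mem_setOf_eq]

lemma dmap_dirac (g : SCSP A → SCSP A) (u : SCSP A) :
    dmap g (dirac u) = dirac (g u) := by
  funext y
  have hS : dsupp (dirac u) ⊆ ↑({u} : Finset (SCSP A)) := by
    intro t ht
    simp only [dsupp, Function.mem_support, dirac] at ht
    have : t = u := by by_contra hne; exact ht (if_neg hne)
    simp [this]
  rw [dmap_eq_sum g hS]
  simp [dirac, eq_comm]

lemma dmap_comb (g : SCSP A → SCSP A) {Δ₁ Δ₂ : Wt (SCSP A)}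
    (h₁ : (dsupp Δ₁).Finite) (h₂ : (dsupp Δ₂).Finite) (p q : ℝ) :
    dmap g (fun x => p * Δ₁ x + q * Δ₂ x)
      = fun y => p * dmap g Δ₁ y + q * dmap g Δ₂ y := by
  funext y
  classical
  set S : Finset (SCSP A) := h₁.toFinset ∪ h₂.toFinset with hSdef
  have hS1 : dsupp Δ₁ ⊆ ↑S := by
    intro x hx; simp [hSdef, Set.Finite.mem_toFinset]; left
    simpa [Set.Finite.mem_toFinset] using hx
  have hS2 : dsupp Δ₂ ⊆ ↑S := by
    intro x hx; simp [hSdef, Set.Finite.mem_toFinset]; right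
    simpa [Set.Finite.mem_toFinset] using hx
  have hS : dsupp (fun x => p * Δ₁ x + q * Δ₂ x) ⊆ ↑S := by
    intro x hx
    simp only [dsupp, Function.mem_support] at hx
    by_contra hn
    have e1 : Δ₁ x = 0 := by
      by_contra h; exact hn (hS1 h)
    have e2 : Δ₂ x = 0 := by
      by_contra h; exact hn (hS2 h)
    rw [e1, e2] at hx; simp at hx
  rw [dmap_eq_sum g hS y, dmap_eq_sum g hS1 y, dmap_eq_sum g hS2 y]
  rw [Finset.mul_sum, Finset.mul_sum, ← Finset.sum_add_distrib]
  refine Finset.sum_congr rfl fun x _ => ?_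
  split <;> ring

/-! echC interpretation and well-formedness -/

lemma echCS_WF : ∀ {Q : PCSP A}, ∀ {s : SCSP A}, SWF s → PWF Q → PWF (echCS s Q)
  | .st t, s, hs, h => by
      cases h with | st ht => exact .st (.ech hs ht)
  | .pch p Q₁ Q₂, s, hs, h => by
      cases h with
      | pch h0 h1 h2 h3 => exact .pch h0 h1 (echCS_WF hs h2) (echCS_WF hs h3)

lemma echC_WF : ∀ {P Q : PCSP A}, PWF P → PWF Q → PWF (echC P Q)
  | .st s, Q, hP, hQ => by
      cases hP with | st hs => exact echCS_WF hs hQ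
  | .pch p P₁ P₂, Q, hP, hQ => by
      cases hP with
      | pch h0 h1 h2 h3 => exact .pch h0 h1 (echC_WF h2 hQ) (echC_WF h3 hQ)

lemma echCS_NoPar : ∀ {Q : PCSP A}, ∀ {s : SCSP A}, SNoPar s → PNoPar Q → PNoPar (echCS s Q)
  | .st t, s, hs, h => by
      cases h with | st ht => exact .st (.ech hs ht)
  | .pch p Q₁ Q₂, s, hs, h => by
      cases h with
      | pch h2 h3 => exact .pch (echCS_NoPar hs h2) (echCS_NoPar hs h3)

lemma echC_NoPar : ∀ {P Q : PCSP A}, PNoPar P → PNoPar Q → PNoPar (echC P Q)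
  | .st s, Q, hP, hQ => by
      cases hP with | st hs => exact echCS_NoPar hs hQ
  | .pch p P₁ P₂, Q, hP, hQ => by
      cases hP with
      | pch h2 h3 => exact .pch (echC_NoPar h2 hQ) (echC_NoPar h3 hQ)

lemma interp_echCS : ∀ (Q : PCSP A) (s : SCSP A),
    (echCS s Q).interp = dmap (fun u => SCSP.ech s u) Q.interp
  | .st t, s => by
      show (PCSP.st (.ech s t)).interp = _
      rw [interp_st, interp_st, dmap_dirac]
  | .pch p Q₁ Q₂, s => by
      show (PCSP.pch p (echCS s Q₁) (echCS s Q₂)).interp = _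
      rw [interp_pch, interp_pch,
        dmap_comb _ (dsupp_interp_finite Q₁) (dsupp_interp_finite Q₂) p (1-p),
        interp_echCS Q₁ s, interp_echCS Q₂ s]

lemma interp_echC_st : ∀ (P : PCSP A) (t : SCSP A),
    (echC P (.st t)).interp = dmap (fun u => SCSP.ech u t) P.interp
  | .st s, t => by
      show (PCSP.st (.ech s t)).interp = _
      rw [interp_st, interp_st, dmap_dirac]
  | .pch p P₁ P₂, t => by
      show (PCSP.pch p (echC P₁ (.st t)) (echC P₂ (.st t))).interp = _
      rw [interp_pch, interp_pch,
        dmap_comb _ (dsupp_interp_finite P₁) (dsupp_interp_finite P₂) p (1-p),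
        interp_echC_st P₁ t, interp_echC_st P₂ t]

/-! #### Finite convex combinations of process terms -/

/-- Scale the weights of a weighted list of processes. -/
def scaleL (c : ℝ) (L : List (ℝ × PCSP A)) : List (ℝ × PCSP A) :=
  L.map (fun e => (c * e.1, e.2))

/-- Total weight of a weighted list. -/
def wsum (L : List (ℝ × PCSP A)) : ℝ := (L.map Prod.fst).sum

/-- The weight function (distribution) denoted by a weighted list. -/
def Wfn (L : List (ℝ × PCSP A)) : Wt (SCSP A) :=
  fun t => (L.map (fun e => e.1 * e.2.interp t)).sum

/-- All weights nonnegative. -/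
def NNL (L : List (ℝ × PCSP A)) : Prop := ∀ e ∈ L, 0 ≤ e.1

/-- All weights positive. -/
def PosL (L : List (ℝ × PCSP A)) : Prop := ∀ e ∈ L, 0 < e.1

/-- All components are state-based. -/
def StateL (L : List (ℝ × PCSP A)) : Prop := ∀ e ∈ L, ∃ s, e.2 = PCSP.st s

/-- The nested probabilistic choice denoted by a weighted list (weights
assumed nonnegative, summing to 1). -/
def mix : List (ℝ × PCSP A) → PCSP A
  | [] => .st .nil
  | (w, P) :: l =>
      if w ≤ 0 then mix l
      else if 1 ≤ w then P
      else .pch w P (mix (scaleL (1-w)⁻¹ l))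
  termination_by L => L.length
  decreasing_by
  · simp
  · simp [scaleL]

section MixDev
variable {A : Type}

@[simp] lemma scaleL_nil (c : ℝ) : scaleL c ([] : List (ℝ × PCSP A)) = [] := rfl

@[simp] lemma scaleL_cons (c : ℝ) (e : ℝ × PCSP A) (l : List (ℝ × PCSP A)) :
    scaleL c (e :: l) = (c * e.1, e.2) :: scaleL c l := rfl

@[simp] lemma length_scaleL (c : ℝ) (L : List (ℝ × PCSP A)) :
    (scaleL c L).length = L.length := by simp [scaleL]

lemma scaleL_scaleL (c d : ℝ) (L : List (ℝ × PCSP A)) :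
    scaleL c (scaleL d L) = scaleL (c*d) L := by
  induction L with
  | nil => rfl
  | cons e l ih => simp [ih, mul_assoc]

lemma scaleL_one (L : List (ℝ × PCSP A)) : scaleL 1 L = L := by
  induction L with
  | nil => rfl
  | cons e l ih => simp [ih]

@[simp] lemma wsum_nil : wsum ([] : List (ℝ × PCSP A)) = 0 := rfl

@[simp] lemma wsum_cons (e : ℝ × PCSP A) (l : List (ℝ × PCSP A)) :
    wsum (e :: l) = e.1 + wsum l := rfl

lemma wsum_append (L₁ L₂ : List (ℝ × PCSP A)) :
    wsum (L₁ ++ L₂) = wsum L₁ + wsum L₂ := by simp [wsum]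

lemma wsum_scaleL (c : ℝ) (L : List (ℝ × PCSP A)) :
    wsum (scaleL c L) = c * wsum L := by
  induction L with
  | nil => simp
  | cons e l ih => simp [ih]; ring

lemma wsum_nonneg {L : List (ℝ × PCSP A)} (h : NNL L) : 0 ≤ wsum L := by
  induction L with
  | nil => simp
  | cons e l ih =>
      have h1 := h e (by simp)
      have h2 := ih (fun e' he' => h e' (by simp [he']))
      simp; linarith

lemma wsum_pos {L : List (ℝ × PCSP A)} (h : PosL L) (hne : L ≠ []) : 0 < wsum L := by
  cases L with
  | nil => exact absurd rfl hne
  | cons e l =>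
      have h1 := h e (by simp)
      have h2 := wsum_nonneg (L := l) (fun e' he' => le_of_lt (h e' (by simp [he'])))
      simp; linarith

lemma all_zero_of_wsum_zero {L : List (ℝ × PCSP A)} (h : NNL L) (hs : wsum L = 0) :
    ∀ e ∈ L, e.1 = 0 := by
  induction L with
  | nil => simp
  | cons e l ih =>
      have h1 := h e (by simp)
      have h2 := wsum_nonneg (L := l) (fun e' he' => h e' (by simp [he']))
      simp only [wsum_cons] at hs
      have he : e.1 = 0 := by linarith
      have hl : wsum l = 0 := by linarith
      intro e' he'
      rcases List.mem_cons.1 he' with rfl | hmem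
      · exact he
      · exact ih (fun x hx => h x (by simp [hx])) hl e' hmem

@[simp] lemma Wfn_nil (t : SCSP A) : Wfn ([] : List (ℝ × PCSP A)) t = 0 := rfl

@[simp] lemma Wfn_cons (e : ℝ × PCSP A) (l : List (ℝ × PCSP A)) (t : SCSP A) :
    Wfn (e :: l) t = e.1 * e.2.interp t + Wfn l t := rfl

lemma Wfn_append (L₁ L₂ : List (ℝ × PCSP A)) (t : SCSP A) :
    Wfn (L₁ ++ L₂) t = Wfn L₁ t + Wfn L₂ t := by simp [Wfn]

lemma Wfn_scaleL (c : ℝ) (L : List (ℝ × PCSP A)) (t : SCSP A) :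
    Wfn (scaleL c L) t = c * Wfn L t := by
  induction L with
  | nil => simp
  | cons e l ih => simp [ih]; ring

lemma Wfn_zero_of_weights {L : List (ℝ × PCSP A)} (h : ∀ e ∈ L, e.1 = 0) (t : SCSP A) :
    Wfn L t = 0 := by
  induction L with
  | nil => simp
  | cons e l ih =>
      have h1 := h e (by simp)
      simp [h1, ih (fun e' he' => h e' (by simp [he']))]

lemma mix_nil : mix ([] : List (ℝ × PCSP A)) = .st .nil := by rw [mix]

lemma mix_cons (w : ℝ) (P : PCSP A) (l : List (ℝ × PCSP A)) :
    mix ((w, P) :: l)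
      = if w ≤ 0 then mix l
        else if 1 ≤ w then P
        else .pch w P (mix (scaleL (1-w)⁻¹ l)) := by rw [mix]

lemma interp_mix_aux : ∀ (n : ℕ) (L : List (ℝ × PCSP A)), L.length ≤ n →
    NNL L → wsum L = 1 → (mix L).interp = Wfn L
  | 0, [], _, _, hs => by simp at hs
  | 0, e :: l, h, _, _ => by simp at h
  | n+1, [], _, _, hs => by simp at hs
  | n+1, (w, P) :: l, hlen, hnn, hs => by
      have hw0 : 0 ≤ w := hnn (w, P) (List.mem_cons_self)
      have hlnn : NNL l := fun e he => hnn e (by simp [he])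
      have hlsum : 0 ≤ wsum l := wsum_nonneg hlnn
      simp only [wsum_cons] at hs
      rw [mix_cons]
      split_ifs with h0 h1
      · -- w = 0
        have hw : w = 0 := le_antisymm h0 hw0
        subst hw
        rw [interp_mix_aux n l (by simpa using hlen) hlnn (by linarith)]
        funext t; simp
      · -- w = 1
        have hw : w = 1 := le_antisymm (by linarith) h1
        have hl0 : wsum l = 0 := by linarith
        funext t
        rw [Wfn_cons, Wfn_zero_of_weights (all_zero_of_wsum_zero hlnn hl0) t, hw]
        ring
      · -- 0 < w < 1
        push_neg at h0 h1
        have hne : (1 : ℝ) - w ≠ 0 := by linarith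
        have hinv : 0 < (1-w)⁻¹ := by
          have h2 : (0:ℝ) < 1 - w := by linarith
          positivity
        have hrec := interp_mix_aux n (scaleL (1-w)⁻¹ l)
          (by simpa using hlen)
          (fun e he => by
            simp only [scaleL, List.mem_map] at he
            obtain ⟨e', he', rfl⟩ := he
            exact mul_nonneg (le_of_lt hinv) (hlnn e' he'))
          (by rw [wsum_scaleL]; field_simp; linarith)
        funext t
        rw [interp_pch, hrec]
        simp only [Wfn_scaleL, Wfn_cons]
        field_simp

lemma interp_mix {L : List (ℝ × PCSP A)} (hnn : NNL L) (hs : wsum L = 1) :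
    (mix L).interp = Wfn L :=
  interp_mix_aux L.length L le_rfl hnn hs

lemma mix_WF_aux : ∀ (n : ℕ) (L : List (ℝ × PCSP A)), L.length ≤ n →
    (∀ e ∈ L, 0 < e.1 → PWF e.2) → PWF (mix L)
  | 0, [], _, _ => by rw [mix_nil]; exact .st .nil
  | 0, e :: l, h, _ => by simp at h
  | n+1, [], _, _ => by rw [mix_nil]; exact .st .nil
  | n+1, (w, P) :: l, hlen, h => by
      rw [mix_cons]
      split_ifs with h0 h1
      · exact mix_WF_aux n l (by simpa using hlen) (fun e he => h e (by simp [he]))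
      · exact h (w, P) (List.mem_cons_self) (by simp only; linarith)
      · push_neg at h0 h1
        refine .pch h0 h1 (h (w, P) (List.mem_cons_self) h0) ?_
        refine mix_WF_aux n _ (by simpa using hlen) ?_
        intro e he hpos
        simp only [scaleL, List.mem_map] at he
        obtain ⟨e', he', rfl⟩ := he
        have hinv : 0 < (1-w)⁻¹ := by
          have h2 : (0:ℝ) < 1 - w := by linarith
          positivity
        refine h e' (by simp [he']) ?_
        simp only at hpos
        by_contra hle
        push_neg at hle
        nlinarith

lemma mix_WF {L : List (ℝ × PCSP A)} (h : ∀ e ∈ L, 0 < e.1 → PWF e.2) : PWF (mix L) :=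
  mix_WF_aux L.length L le_rfl h

lemma mix_NoPar_aux : ∀ (n : ℕ) (L : List (ℝ × PCSP A)), L.length ≤ n →
    (∀ e ∈ L, 0 < e.1 → PNoPar e.2) → PNoPar (mix L)
  | 0, [], _, _ => by rw [mix_nil]; exact .st .nil
  | 0, e :: l, h, _ => by simp at h
  | n+1, [], _, _ => by rw [mix_nil]; exact .st .nil
  | n+1, (w, P) :: l, hlen, h => by
      rw [mix_cons]
      split_ifs with h0 h1
      · exact mix_NoPar_aux n l (by simpa using hlen) (fun e he => h e (by simp [he]))
      · exact h (w, P) (List.mem_cons_self) (by simp only; linarith)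
      · push_neg at h0 h1
        refine .pch (h (w, P) (List.mem_cons_self) h0) ?_
        refine mix_NoPar_aux n _ (by simpa using hlen) ?_
        intro e he hpos
        simp only [scaleL, List.mem_map] at he
        obtain ⟨e', he', rfl⟩ := he
        have hinv : 0 < (1-w)⁻¹ := by
          have h2 : (0:ℝ) < 1 - w := by linarith
          positivity
        refine h e' (by simp [he']) ?_
        simp only at hpos
        by_contra hle
        push_neg at hle
        nlinarith

lemma mix_NoPar {L : List (ℝ × PCSP A)} (h : ∀ e ∈ L, 0 < e.1 → PNoPar e.2) :
    PNoPar (mix L) :=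
  mix_NoPar_aux L.length L le_rfl h

/-- Pairing relation for `mix` congruence. -/
def PairRel (Rel : PCSP A → PCSP A → Prop) (e₁ e₂ : ℝ × PCSP A) : Prop :=
  e₁.1 = e₂.1 ∧ Rel e₁.2 e₂.2

lemma forall₂_scaleL {Rel : PCSP A → PCSP A → Prop} {l₁ l₂ : List (ℝ × PCSP A)}
    (c : ℝ) (h : List.Forall₂ (PairRel Rel) l₁ l₂) :
    List.Forall₂ (PairRel Rel) (scaleL c l₁) (scaleL c l₂) := by
  induction h with
  | nil => exact .nil
  | cons h1 _ ih => exact .cons ⟨by simp [h1.1], h1.2⟩ ih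

lemma mix_rel_aux {Rel : PCSP A → PCSP A → Prop}
    (hrefl : ∀ P, Rel P P)
    (hpch : ∀ (p : ℝ) {P₁ P₂ Q₁ Q₂}, Rel P₁ Q₁ → Rel P₂ Q₂ →
      Rel (.pch p P₁ P₂) (.pch p Q₁ Q₂)) :
    ∀ (n : ℕ) (L₁ L₂ : List (ℝ × PCSP A)), L₁.length ≤ n →
    List.Forall₂ (PairRel Rel) L₁ L₂ → Rel (mix L₁) (mix L₂) := by
  intro n
  induction n with
  | zero =>
      intro L₁ L₂ hlen h
      cases h with
      | nil => exact hrefl _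
      | cons h1 h2 => simp at hlen
  | succ n ih =>
      intro L₁ L₂ hlen h
      cases h with
      | nil => exact hrefl _
      | @cons e₁ e₂ l₁ l₂ h1 h2 =>
          obtain ⟨w, P⟩ := e₁
          obtain ⟨w', Q⟩ := e₂
          obtain ⟨hw, hR⟩ := h1
          simp only at hw
          subst hw
          rw [mix_cons, mix_cons]
          split_ifs with h0 h1'
          · exact ih l₁ l₂ (by simpa using hlen) h2
          · exact hR
          · exact hpch w hR (ih _ _ (by simpa using hlen) (forall₂_scaleL _ h2))

lemma mix_rel {Rel : PCSP A → PCSP A → Prop}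
    (hrefl : ∀ P, Rel P P)
    (hpch : ∀ (p : ℝ) {P₁ P₂ Q₁ Q₂}, Rel P₁ Q₁ → Rel P₂ Q₂ →
      Rel (.pch p P₁ P₂) (.pch p Q₁ Q₂))
    {L₁ L₂ : List (ℝ × PCSP A)}
    (h : List.Forall₂ (PairRel Rel) L₁ L₂) : Rel (mix L₁) (mix L₂) :=
  mix_rel_aux hrefl hpch L₁.length L₁ L₂ le_rfl h

/-- Prefixing every component of a weighted list. -/
def preL (a : A) (L : List (ℝ × PCSP A)) : List (ℝ × PCSP A) :=
  L.map (fun e => (e.1, PCSP.st (.pre a e.2)))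

@[simp] lemma preL_nil (a : A) : preL a ([] : List (ℝ × PCSP A)) = [] := rfl

@[simp] lemma preL_cons (a : A) (e : ℝ × PCSP A) (l : List (ℝ × PCSP A)) :
    preL a (e :: l) = (e.1, PCSP.st (.pre a e.2)) :: preL a l := rfl

lemma preL_scaleL (a : A) (c : ℝ) (L : List (ℝ × PCSP A)) :
    preL a (scaleL c L) = scaleL c (preL a L) := by
  induction L with
  | nil => rfl
  | cons e l ih => simp [ih]

lemma mix_pre_aux (a : A) : ∀ (n : ℕ) (L : List (ℝ × PCSP A)), L.length ≤ n →
    NNL L → wsum L = 1 → LeMay (.st (.pre a (mix L))) (mix (preL a L))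
  | 0, [], _, _, hs => by simp at hs
  | 0, e :: l, h, _, _ => by simp at h
  | n+1, [], _, _, hs => by simp at hs
  | n+1, (w, P) :: l, hlen, hnn, hs => by
      have hw0 : 0 ≤ w := hnn (w, P) (List.mem_cons_self)
      have hlnn : NNL l := fun e he => hnn e (by simp [he])
      have hlsum : 0 ≤ wsum l := wsum_nonneg hlnn
      simp only [wsum_cons] at hs
      rw [preL_cons, mix_cons, mix_cons ((w, P) : ℝ × PCSP A).1]
      simp only
      split_ifs with h0 h1
      · exact mix_pre_aux a n l (by simpa using hlen) hlnn (by linarith)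
      · exact LeMay.rfl _
      · push_neg at h0 h1
        have hne : (1 : ℝ) - w ≠ 0 := by linarith
        have hinv : 0 < (1-w)⁻¹ := by
          have h2 : (0:ℝ) < 1 - w := by linarith
          positivity
        have ihtail := mix_pre_aux a n (scaleL (1-w)⁻¹ l)
          (by simpa using hlen)
          (fun e he => by
            simp only [scaleL, List.mem_map] at he
            obtain ⟨e', he', rfl⟩ := he
            exact mul_nonneg (le_of_lt hinv) (hlnn e' he'))
          (by rw [wsum_scaleL]; field_simp; linarith)
        rw [preL_scaleL] at ihtail
        exact LeMay.trans (LeMay.may3 a w h0 h1 P _)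
          (LeMay.congPch w (LeMay.rfl _) ihtail)

lemma mix_pre (a : A) {L : List (ℝ × PCSP A)} (hnn : NNL L) (hs : wsum L = 1) :
    LeMay (.st (.pre a (mix L))) (mix (preL a L)) :=
  mix_pre_aux a L.length L le_rfl hnn hs

end MixDev

section Completeness
variable {A : Type}

lemma wsum_perm {l₁ l₂ : List (ℝ × PCSP A)} (h : l₁.Perm l₂) : wsum l₁ = wsum l₂ :=
  (h.map Prod.fst).sum_eq

lemma Wfn_perm {l₁ l₂ : List (ℝ × PCSP A)} (h : l₁.Perm l₂) (t : SCSP A) :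
    Wfn l₁ t = Wfn l₂ t := by
  unfold Wfn
  exact List.Perm.sum_eq (List.Perm.map (fun e : ℝ × PCSP A => e.1 * e.2.interp t) h)

lemma Wfn_nonneg_state {L : List (ℝ × PCSP A)} (hst : StateL L) (hnn : NNL L)
    (t : SCSP A) : 0 ≤ Wfn L t := by
  induction L with
  | nil => simp
  | cons e l ih =>
      obtain ⟨u, hu⟩ := hst e (by simp)
      have h1 := hnn e (by simp)
      have h2 := ih (fun e' he' => hst e' (by simp [he'])) (fun e' he' => hnn e' (by simp [he']))
      rw [Wfn_cons, hu]
      have := dirac_nonneg u t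
      simp only [interp_st]
      nlinarith

lemma filter_append_perm' (p : ℝ × PCSP A → Bool) (l : List (ℝ × PCSP A)) :
    (l.filter p ++ l.filter (fun x => !p x)).Perm l := by
  induction l with
  | nil => simp
  | cons x t ih =>
      by_cases h : p x
      · simpa [List.filter_cons, h] using ih.cons x
      · have h' : p x = false := by simpa using h
        simp only [List.filter_cons, h', Bool.not_false, cond_false, cond_true, if_neg,
          Bool.false_eq_true, not_false_iff, ite_false, ite_true]
        exact List.perm_middle.trans (ih.cons x)

lemma mix_cons_pos {A : Type} {w : ℝ} (h0 : 0 < w) (h1 : w < 1) (P : PCSP A)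
    (l : List (ℝ × PCSP A)) :
    mix ((w,P)::l) = .pch w P (mix (scaleL (1-w)⁻¹ l)) := by
  rw [mix_cons, if_neg (not_le.2 h0), if_neg (not_le.2 h1)]

lemma mix_cons_one {A : Type} {w : ℝ} (h0 : 0 < w) (h1 : 1 ≤ w) (P : PCSP A)
    (l : List (ℝ × PCSP A)) :
    mix ((w,P)::l) = P := by
  rw [mix_cons, if_neg (not_le.2 h0), if_pos h1]

lemma NNL_scaleL {c : ℝ} (hc : 0 ≤ c) {l : List (ℝ × PCSP A)} (h : NNL l) :
    NNL (scaleL c l) := by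
  intro e he
  simp only [scaleL, List.mem_map] at he
  obtain ⟨e', he', rfl⟩ := he
  exact mul_nonneg hc (h e' he')

lemma PosL_scaleL {c : ℝ} (hc : 0 < c) {l : List (ℝ × PCSP A)} (h : PosL l) :
    PosL (scaleL c l) := by
  intro e he
  simp only [scaleL, List.mem_map] at he
  obtain ⟨e', he', rfl⟩ := he
  exact mul_pos hc (h e' he')

lemma scaleL_perm (c : ℝ) {l₁ l₂ : List (ℝ × PCSP A)} (h : l₁.Perm l₂) :
    (scaleL c l₁).Perm (scaleL c l₂) := by
  unfold scaleL; exact h.map _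

lemma StateL_scaleL {c : ℝ} {l : List (ℝ × PCSP A)} (h : StateL l) :
    StateL (scaleL c l) := by
  intro e he
  simp only [scaleL, List.mem_map] at he
  obtain ⟨e', he', rfl⟩ := he
  exact h e' he'

/-- Permutation invariance of `mix` up to `=_E`. -/
lemma perm_mix_aux {l₁ l₂ : List (ℝ × PCSP A)} (hp : l₁.Perm l₂) :
    ∀ (c : ℝ), 0 < c → PosL l₁ → wsum (scaleL c l₁) = 1 →
    EqE (mix (scaleL c l₁)) (mix (scaleL c l₂)) := by
  induction hp with
  | nil => intro c hc hpos hs; exact .refl _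
  | @cons x t₁ t₂ h ih =>
      intro c hc hpos hs
      obtain ⟨w, P⟩ := x
      have hw : 0 < w := hpos (w, P) (List.mem_cons_self)
      have htpos : PosL t₁ := fun e he => hpos e (by simp [he])
      have hts : 0 ≤ wsum (scaleL c t₁) :=
        wsum_nonneg (NNL_scaleL (le_of_lt hc) (fun e he => le_of_lt (htpos e he)))
      rw [scaleL_cons] at hs ⊢
      rw [scaleL_cons]
      simp only [wsum_cons] at hs
      have hcw : 0 < c * w := mul_pos hc hw
      rw [mix_cons, mix_cons]
      simp only
      split_ifs with h0 h1
      · linarith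
      · exact .refl _
      · push_neg at h0 h1
        rw [scaleL_scaleL, scaleL_scaleL]
        have hcw1 : 0 < 1 - c * w := by linarith
        have hc' : 0 < (1 - c*w)⁻¹ * c := by positivity
        refine EqE.congPch _ (.refl _) (ih _ hc' htpos ?_)
        rw [wsum_scaleL] at hs ⊢
        have hne : (1:ℝ) - c*w ≠ 0 := ne_of_gt hcw1
        field_simp
        linarith
  | @swap x y l =>
      -- goal : mix (scaleL c (y :: x :: l)) = mix (scaleL c (x :: y :: l))
      intro c hc hpos hs
      obtain ⟨wx, X⟩ := x
      obtain ⟨wy, Y⟩ := y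
      have hwy : 0 < wy := hpos (wy, Y) (List.mem_cons_self)
      have hwx : 0 < wx := hpos (wx, X) (List.mem_cons_of_mem _ (List.mem_cons_self))
      have hlpos : PosL l := fun e he => hpos e (by simp [he])
      have hls : 0 ≤ wsum (scaleL c l) :=
        wsum_nonneg (NNL_scaleL (le_of_lt hc) (fun e he => le_of_lt (hlpos e he)))
      simp only [scaleL_cons, wsum_cons] at hs ⊢
      set a := c * wy with ha
      set b := c * wx with hb
      have ha0 : 0 < a := mul_pos hc hwy
      have hb0 : 0 < b := mul_pos hc hwx
      have ha1 : a < 1 := by linarith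
      have hb1 : b < 1 := by linarith
      have h1a : (0:ℝ) < 1 - a := by linarith
      have h1b : (0:ℝ) < 1 - b := by linarith
      have h1a' : (1:ℝ) - a ≠ 0 := ne_of_gt h1a
      have h1b' : (1:ℝ) - b ≠ 0 := ne_of_gt h1b
      rcases eq_or_ne l [] with rfl | hlne
      · -- l = []
        simp only [scaleL_nil, wsum_nil, add_zero] at hs
        have hab : a + b = 1 := by linarith
        have eL : mix ((a, Y) :: (b, X) :: scaleL c []) = .pch a Y X := by
          rw [scaleL_nil, mix_cons_pos ha0 ha1, scaleL_cons, scaleL_nil]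
          rw [show (1-a)⁻¹ * b = 1 by field_simp; linarith]
          rw [mix_cons_one one_pos le_rfl]
        have eR : mix ((b, X) :: (a, Y) :: scaleL c []) = .pch b X Y := by
          rw [scaleL_nil, mix_cons_pos hb0 hb1, scaleL_cons, scaleL_nil]
          rw [show (1-b)⁻¹ * a = 1 by field_simp; linarith]
          rw [mix_cons_one one_pos le_rfl]
        rw [eL, eR]
        have h2 := EqE.P2 a ha0 ha1 Y X
        rwa [show 1 - a = b by linarith] at h2
      · -- l nonempty
        have hlpos' : 0 < wsum (scaleL c l) :=
          wsum_pos (PosL_scaleL hc hlpos) (by simp [scaleL, hlne])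
        have hD : 0 < 1 - a - b := by linarith
        have hq0 : 0 < a + b := by linarith
        have hq1 : a + b < 1 := by linarith
        have hqne : a + b ≠ 0 := ne_of_gt hq0
        have hD' : (1:ℝ) - a - b ≠ 0 := ne_of_gt hD
        set M := mix (scaleL ((1-a-b)⁻¹ * c) l) with hM
        have hb1' : (1-a)⁻¹ * b < 1 := by
          rw [← div_eq_inv_mul, div_lt_one h1a]; linarith
        have ha1' : (1-b)⁻¹ * a < 1 := by
          rw [← div_eq_inv_mul, div_lt_one h1b]; linarith
        have hb0' : 0 < (1-a)⁻¹ * b := by positivity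
        have ha0' : 0 < (1-b)⁻¹ * a := by positivity
        have esc1 : ((1:ℝ) - (1-a)⁻¹ * b)⁻¹ * ((1-a)⁻¹ * c) = (1-a-b)⁻¹ * c := by
          rw [show (1:ℝ) - (1-a)⁻¹ * b = (1-a-b) * (1-a)⁻¹ by field_simp; try ring]
          rw [mul_inv, inv_inv]
          field_simp
          try ring
        have esc2 : ((1:ℝ) - (1-b)⁻¹ * a)⁻¹ * ((1-b)⁻¹ * c) = (1-a-b)⁻¹ * c := by
          rw [show (1:ℝ) - (1-b)⁻¹ * a = (1-a-b) * (1-b)⁻¹ by field_simp; try ring]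
          rw [mul_inv, inv_inv]
          field_simp
          try ring
        have eL : mix ((a, Y) :: (b, X) :: scaleL c l)
            = .pch a Y (.pch ((1-a)⁻¹ * b) X M) := by
          rw [mix_cons_pos ha0 ha1, scaleL_cons, scaleL_scaleL,
            mix_cons_pos hb0' hb1', scaleL_scaleL, esc1, hM]
        have eR : mix ((b, X) :: (a, Y) :: scaleL c l)
            = .pch b X (.pch ((1-b)⁻¹ * a) Y M) := by
          rw [mix_cons_pos hb0 hb1, scaleL_cons, scaleL_scaleL,
            mix_cons_pos ha0' ha1', scaleL_scaleL, esc2, hM]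
        rw [eL, eR]
        set q := a + b with hqdef
        set p := a / q with hpdef
        have hp0 : 0 < p := div_pos ha0 hq0
        have hp1 : p < 1 := by rw [hpdef, div_lt_one hq0]; linarith
        have e1 := EqE.P3 p q hp0 hp1 hq0 hq1 Y X M
        have hpq : p * q = a := by rw [hpdef]; field_simp
        rw [hpq] at e1
        rw [show (1-p)*q/(1-a) = (1-a)⁻¹ * b by
          rw [show (1-p)*q = b by rw [hpdef]; field_simp; try ring]
          rw [div_eq_inv_mul]] at e1
        have e2 := EqE.congPch q (EqE.P2 p hp0 hp1 Y X) (EqE.refl M)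
        have e3 := EqE.P3 (1-p) q (by linarith) (by linarith) hq0 hq1 X Y M
        rw [show (1-p)*q = b by rw [hpdef]; field_simp; try ring] at e3
        rw [show (1-(1-p))*q/(1-b) = (1-b)⁻¹ * a by
          rw [show (1-(1-p))*q = a by rw [hpdef]; field_simp; try ring]
          rw [div_eq_inv_mul]] at e3
        exact (e1.symm.trans e2).trans e3
  | trans h1 h2 ih1 ih2 =>
      intro c hc hpos hs
      have hpos2 : PosL _ := fun e he => hpos e (h1.symm.subset he)
      exact (ih1 c hc hpos hs).trans
        (ih2 c hc hpos2 (by rw [← wsum_perm (scaleL_perm c h1)]; exact hs))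

lemma perm_mix {l₁ l₂ : List (ℝ × PCSP A)} (hp : l₁.Perm l₂) (hpos : PosL l₁)
    (hs : wsum l₁ = 1) : EqE (mix l₁) (mix l₂) := by
  have h := perm_mix_aux hp 1 one_pos hpos (by rw [scaleL_one]; exact hs)
  rwa [scaleL_one, scaleL_one] at h


/-- Merging two adjacent equal components. -/
lemma merge_adj {w₁ w₂ : ℝ} (X : PCSP A) {t : List (ℝ × PCSP A)}
    (h1 : 0 < w₁) (h2 : 0 < w₂) (hnn : NNL t) (hs : w₁ + w₂ + wsum t = 1) :
    EqE (mix ((w₁,X)::(w₂,X)::t)) (mix ((w₁+w₂,X)::t)) := by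
  have htn := wsum_nonneg hnn
  have hw11 : w₁ < 1 := by linarith
  have h1w1 : (0:ℝ) < 1 - w₁ := by linarith
  have h1w1' : (1:ℝ) - w₁ ≠ 0 := ne_of_gt h1w1
  by_cases hT : wsum t = 0
  · have h12 : w₁ + w₂ = 1 := by linarith
    have eR : mix ((w₁+w₂,X)::t) = X := mix_cons_one (by linarith) (by linarith) X t
    have eL : mix ((w₁,X)::(w₂,X)::t) = .pch w₁ X X := by
      rw [mix_cons_pos h1 hw11, scaleL_cons]
      rw [show (1-w₁)⁻¹ * w₂ = 1 by field_simp; linarith]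
      rw [mix_cons_one one_pos le_rfl]
    rw [eL, eR]
    exact EqE.P1 w₁ h1 hw11 X
  · have hT' : 0 < wsum t := lt_of_le_of_ne htn (Ne.symm hT)
    have h12 : w₁ + w₂ < 1 := by linarith
    have hq0 : 0 < w₁ + w₂ := by linarith
    have hD : (0:ℝ) < 1 - w₁ - w₂ := by linarith
    have hD' : (1:ℝ) - w₁ - w₂ ≠ 0 := ne_of_gt hD
    have hqne : w₁ + w₂ ≠ 0 := ne_of_gt hq0
    have hb1 : (1-w₁)⁻¹ * w₂ < 1 := by
      rw [← div_eq_inv_mul, div_lt_one h1w1]; linarith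
    have hb0 : 0 < (1-w₁)⁻¹ * w₂ := by positivity
    have esc : ((1:ℝ) - (1-w₁)⁻¹ * w₂)⁻¹ * (1-w₁)⁻¹ = (1-w₁-w₂)⁻¹ := by
      rw [show (1:ℝ) - (1-w₁)⁻¹ * w₂ = (1-w₁-w₂) * (1-w₁)⁻¹ by field_simp; try ring]
      rw [mul_inv, inv_inv]
      field_simp
      try ring
    set M := mix (scaleL (1-w₁-w₂)⁻¹ t) with hM
    have eL : mix ((w₁,X)::(w₂,X)::t) = .pch w₁ X (.pch ((1-w₁)⁻¹ * w₂) X M) := by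
      rw [mix_cons_pos h1 hw11, scaleL_cons, mix_cons_pos hb0 hb1, scaleL_scaleL, esc, hM]
    have eR : mix ((w₁+w₂,X)::t) = .pch (w₁+w₂) X M := by
      rw [mix_cons_pos hq0 h12, show (1:ℝ) - (w₁+w₂) = 1-w₁-w₂ by ring, hM]
    rw [eL, eR]
    set q := w₁ + w₂ with hqdef
    set p := w₁ / q with hpdef
    have hp0 : 0 < p := div_pos h1 hq0
    have hp1 : p < 1 := by rw [hpdef, div_lt_one hq0]; linarith
    have key := EqE.P3 p q hp0 hp1 hq0 h12 X X M
    rw [show p * q = w₁ by rw [hpdef]; field_simp] at key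
    rw [show (1-p)*q/(1-w₁) = (1-w₁)⁻¹ * w₂ by
      rw [show (1-p)*q = w₂ by rw [hpdef]; field_simp; try ring]
      rw [div_eq_inv_mul]] at key
    have e2 := EqE.congPch q (EqE.P1 p hp0 hp1 X) (EqE.refl M)
    exact key.symm.trans e2

/-- Merging a block of entries with the same component. -/
lemma merge_block : ∀ (B : List (ℝ × PCSP A)) (X : PCSP A) (t : List (ℝ × PCSP A)),
    B ≠ [] → (∀ e ∈ B, e.2 = X ∧ 0 < e.1) → NNL t → wsum (B ++ t) = 1 →
    EqE (mix (B ++ t)) (mix ((wsum B, X) :: t))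
  | [], X, t, hne, _, _, _ => absurd rfl hne
  | [e], X, t, _, hB, hnn, hs => by
      obtain ⟨he2, he1⟩ := hB e (by simp)
      obtain ⟨w, P⟩ := e
      simp only at he2
      simp only [List.cons_append, List.nil_append]
      rw [he2, show wsum [((w:ℝ), X)] = w by simp [wsum]]
      exact .refl _
  | e₁ :: e₂ :: B, X, t, _, hB, hnn, hs => by
      obtain ⟨h12, h11⟩ := hB e₁ (by simp)
      obtain ⟨h22, h21⟩ := hB e₂ (by simp)
      obtain ⟨w₁, P₁⟩ := e₁
      obtain ⟨w₂, P₂⟩ := e₂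
      simp only at h12 h22 h11 h21
      rw [List.cons_append, List.cons_append] at hs ⊢
      rw [h12, h22] at hs ⊢
      simp only [wsum_cons] at hs
      have hBpos : ∀ e ∈ B, e.2 = X ∧ 0 < e.1 := fun e he => hB e (by simp [he])
      have hnnBt : NNL (B ++ t) := by
        intro e he
        rcases List.mem_append.1 he with h | h
        · exact le_of_lt (hBpos e h).2
        · exact hnn e h
      have hs' : w₁ + w₂ + wsum (B ++ t) = 1 := by linarith
      have am := merge_adj X h11 h21 hnnBt hs'
      have ih := merge_block ((w₁+w₂, X)::B) X t (by simp)
        (by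
          intro e he
          rcases List.mem_cons.1 he with rfl | hmem
          · exact ⟨rfl, by show (0:ℝ) < w₁ + w₂; linarith⟩
          · exact hBpos e hmem)
        hnn
        (by rw [List.cons_append]; simp only [wsum_cons, wsum_append] at hs ⊢; linarith)
      rw [List.cons_append] at ih
      have hws : wsum ((w₁+w₂, X)::B) = w₁ + (w₂ + wsum B) := by
        simp only [wsum_cons]; ring
      rw [hws] at ih
      simp only [wsum_cons]
      exact am.trans ih
  termination_by B _ _ => B.length
  decreasing_by simp only [List.length_cons]; omega

lemma Wfn_block_self {s : SCSP A} : ∀ {B : List (ℝ × PCSP A)},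
    (∀ e ∈ B, e.2 = PCSP.st s) → ∀ t, Wfn B t = wsum B * dirac s t := by
  intro B
  induction B with
  | nil => intro _ t; simp
  | cons e l ih =>
      intro h t
      have he := h e (by simp)
      rw [Wfn_cons, he, ih (fun e' he' => h e' (by simp [he'])) t, wsum_cons, interp_st]
      ring

lemma Wfn_no_s {s : SCSP A} : ∀ {L : List (ℝ × PCSP A)}, StateL L →
    (∀ e ∈ L, e.2 ≠ PCSP.st s) → Wfn L s = 0 := by
  intro L
  induction L with
  | nil => intro _ _; simp
  | cons e l ih =>
      intro hst hne
      obtain ⟨u, hu⟩ := hst e (by simp)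
      have hus : u ≠ s := by
        intro h; exact hne e (by simp) (by rw [hu, h])
      rw [Wfn_cons, hu, interp_st]
      rw [show dirac u s = 0 by simp [dirac, Ne.symm hus]]
      rw [ih (fun e' he' => hst e' (by simp [he'])) (fun e' he' => hne e' (by simp [he']))]
      ring

/-- Extraction of the total mass of a single state. -/
lemma extract (s : SCSP A) (L : List (ℝ × PCSP A)) (hpos : PosL L) (hst : StateL L)
    (hs : wsum L = 1) (hWs : 0 < Wfn L s) :
    ∃ L', EqE (mix L) (mix ((Wfn L s, .st s) :: L')) ∧
      PosL L' ∧ StateL L' ∧ wsum ((Wfn L s, .st s) :: L') = 1 ∧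
      (∀ t, Wfn ((Wfn L s, .st s) :: L') t = Wfn L t) ∧
      L'.length < L.length := by
  classical
  set p : ℝ × PCSP A → Bool := fun e => decide (e.2 = PCSP.st s) with hp
  set B := L.filter p with hBdef
  set L' := L.filter (fun e => !p e) with hL'def
  have hperm : (B ++ L').Perm L := filter_append_perm' p L
  have hBmem : ∀ e ∈ B, e.2 = PCSP.st s ∧ 0 < e.1 := by
    intro e he
    have h := List.mem_filter.1 he
    exact ⟨by simpa [hp] using h.2, hpos e h.1⟩
  have hL'mem : ∀ e ∈ L', e ∈ L ∧ e.2 ≠ PCSP.st s := by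
    intro e he
    have h := List.mem_filter.1 he
    exact ⟨h.1, by simpa [hp] using h.2⟩
  have hposL' : PosL L' := fun e he => hpos e (hL'mem e he).1
  have hstL' : StateL L' := fun e he => hst e (hL'mem e he).1
  have hWfnBL' : ∀ t, Wfn (B ++ L') t = Wfn L t := fun t => Wfn_perm hperm t
  have hWfnB : ∀ t, Wfn B t = wsum B * dirac s t :=
    Wfn_block_self (fun e he => (hBmem e he).1)
  have hWfnL's : Wfn L' s = 0 := Wfn_no_s hstL' (fun e he => (hL'mem e he).2)
  have hkey : Wfn L s = wsum B := by
    rw [← hWfnBL' s, Wfn_append, hWfnB s, hWfnL's, dirac_self]; ring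
  have hBne : B ≠ [] := by
    intro h
    rw [h] at hkey
    simp only [wsum_nil] at hkey
    rw [hkey] at hWs
    exact lt_irrefl 0 hWs
  have hsum' : wsum (B ++ L') = 1 := by rw [wsum_perm hperm]; exact hs
  have hmb := merge_block B (.st s) L' hBne hBmem
    (fun e he => le_of_lt (hposL' e he)) hsum'
  refine ⟨L', ?_, hposL', hstL', ?_, ?_, ?_⟩
  · have e1 := perm_mix hperm.symm hpos hs
    rw [hkey]
    exact e1.trans hmb
  · rw [wsum_cons, hkey, ← wsum_append]
    exact hsum'
  · intro t
    rw [Wfn_cons, hkey, interp_st, ← hWfnB t, ← Wfn_append, hWfnBL' t]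
  · have hlen : B.length + L'.length = L.length := by
      have h := hperm.length_eq
      simpa using h
    have hB1 : 0 < B.length := List.length_pos_iff.2 hBne
    omega

/-- Completeness for positive state-based lists. -/
lemma complete_pos : ∀ (n : ℕ) (L₁ L₂ : List (ℝ × PCSP A)), L₁.length ≤ n →
    PosL L₁ → PosL L₂ → StateL L₁ → StateL L₂ → wsum L₁ = 1 → wsum L₂ = 1 →
    (∀ t, Wfn L₁ t = Wfn L₂ t) → EqE (mix L₁) (mix L₂)
  | _, [], _, _, _, _, _, _, hs1, _, _ => by simp at hs1
  | 0, e::l, _, hlen, _, _, _, _, _, _, _ => by simp at hlen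
  | n+1, (w,T)::l₁, L₂, hlen, hp1, hp2, hst1, hst2, hs1, hs2, hW => by
      obtain ⟨s, hTs⟩ := hst1 (w,T) (List.mem_cons_self)
      simp only at hTs
      subst hTs
      have hw : 0 < w := hp1 (w, .st s) (List.mem_cons_self)
      have htlnn : NNL l₁ := fun e he => le_of_lt (hp1 e (by simp [he]))
      have htlst : StateL l₁ := fun e he => hst1 e (by simp [he])
      have hWs : 0 < Wfn ((w, PCSP.st s)::l₁) s := by
        rw [Wfn_cons, interp_st, dirac_self]
        have h := Wfn_nonneg_state htlst htlnn s
        nlinarith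
      obtain ⟨L₁', e₁, hp1', hst1', hsum1', hWfn1', hlen1'⟩ :=
        extract s _ hp1 hst1 hs1 hWs
      have hWs2 : 0 < Wfn L₂ s := by rw [← hW s]; exact hWs
      obtain ⟨L₂', e₂, hp2', hst2', hsum2', hWfn2', _⟩ :=
        extract s L₂ hp2 hst2 hs2 hWs2
      have huq : Wfn L₂ s = Wfn ((w, PCSP.st s)::l₁) s := (hW s).symm
      rw [huq] at e₂ hsum2' hWfn2'
      set u := Wfn ((w, PCSP.st s)::l₁) s with hu
      have hnn1' : NNL L₁' := fun e he => le_of_lt (hp1' e he)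
      have hnn2' : NNL L₂' := fun e he => le_of_lt (hp2' e he)
      have hsl1 : u + wsum L₁' = 1 := by simpa using hsum1'
      have hsl2 : u + wsum L₂' = 1 := by simpa using hsum2'
      have hu1 : u ≤ 1 := by
        have h := wsum_nonneg hnn1'
        linarith
      rcases eq_or_lt_of_le hu1 with h1 | h1
      · have g1 : mix ((u, PCSP.st s)::L₁') = .st s :=
          mix_cons_one hWs (le_of_eq h1.symm) _ _
        have g2 : mix ((u, PCSP.st s)::L₂') = .st s :=
          mix_cons_one hWs (le_of_eq h1.symm) _ _
        have hmid : EqE (mix ((u, PCSP.st s)::L₁')) (mix ((u, PCSP.st s)::L₂')) := by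
          rw [g1, g2]
          exact EqE.refl _
        exact (e₁.trans hmid).trans e₂.symm
      · have h1u : (0:ℝ) < 1 - u := by linarith
        have h1u' : (1:ℝ) - u ≠ 0 := ne_of_gt h1u
        have hinv : 0 < (1-u)⁻¹ := by positivity
        have hWtail : ∀ t, Wfn L₁' t = Wfn L₂' t := by
          intro t
          have a1 := hWfn1' t
          have a2 := hWfn2' t
          rw [Wfn_cons] at a1 a2
          have := hW t
          linarith
        have tailrec := complete_pos n (scaleL (1-u)⁻¹ L₁') (scaleL (1-u)⁻¹ L₂')
          (by
            rw [length_scaleL]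
            have : ((w, PCSP.st s)::l₁).length ≤ n + 1 := hlen
            simp only [List.length_cons] at this hlen1'
            omega)
          (PosL_scaleL hinv hp1') (PosL_scaleL hinv hp2')
          (StateL_scaleL hst1') (StateL_scaleL hst2')
          (by rw [wsum_scaleL]; field_simp; linarith)
          (by rw [wsum_scaleL]; field_simp; linarith)
          (fun t => by rw [Wfn_scaleL, Wfn_scaleL, hWtail t])
        have hmid : EqE (mix ((u, PCSP.st s)::L₁')) (mix ((u, PCSP.st s)::L₂')) := by
          rw [mix_cons_pos hWs h1, mix_cons_pos hWs h1]
          exact EqE.congPch u (.refl _) tailrec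
        exact (e₁.trans hmid).trans e₂.symm

lemma filter_pos_scaleL {c : ℝ} (hc : 0 < c) (l : List (ℝ × PCSP A)) :
    (scaleL c l).filter (fun e => decide (0 < e.1))
      = scaleL c (l.filter (fun e => decide (0 < e.1))) := by
  induction l with
  | nil => rfl
  | cons e t ih =>
      by_cases h : 0 < e.1
      · rw [scaleL_cons, List.filter_cons_of_pos (by simp only [decide_eq_true_eq]; exact mul_pos hc h),
          List.filter_cons_of_pos (by simpa using h), scaleL_cons, ih]
      · rw [scaleL_cons, List.filter_cons_of_neg (by
            simp only [decide_eq_true_eq, not_lt]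
            exact mul_nonpos_of_nonneg_of_nonpos hc.le (not_lt.1 h)),
          List.filter_cons_of_neg (by simpa using h), ih]

lemma mix_posFilter : ∀ (n : ℕ) (L : List (ℝ × PCSP A)), L.length ≤ n →
    mix (L.filter (fun e => decide (0 < e.1))) = mix L
  | 0, [], _ => rfl
  | 0, e::l, h => by simp at h
  | n+1, [], _ => rfl
  | n+1, (w,P)::l, hlen => by
      by_cases h : 0 < w
      · have h0 : ¬ (w ≤ 0) := not_le.2 h
        rw [List.filter_cons_of_pos (by simpa using h)]
        rw [mix_cons, mix_cons, if_neg h0, if_neg h0]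
        split_ifs with h1
        · rfl
        · have hinv : 0 < (1-w)⁻¹ := by
            have : (0:ℝ) < 1 - w := by push_neg at h1; linarith
            positivity
          rw [← filter_pos_scaleL hinv l]
          rw [mix_posFilter n (scaleL (1-w)⁻¹ l) (by simpa using hlen)]
      · rw [List.filter_cons_of_neg (by simpa using h)]
        rw [mix_cons, if_pos (not_lt.1 h)]
        exact mix_posFilter n l (by simpa using hlen)

lemma wsum_posFilter {L : List (ℝ × PCSP A)} (hnn : NNL L) :
    wsum (L.filter (fun e => decide (0 < e.1))) = wsum L := by
  induction L with
  | nil => rfl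
  | cons e l ih =>
      have ihl := ih (fun e' he' => hnn e' (by simp [he']))
      by_cases h : 0 < e.1
      · rw [List.filter_cons_of_pos (by simpa using h), wsum_cons, wsum_cons, ihl]
      · have he0 : e.1 = 0 := le_antisymm (not_lt.1 h) (hnn e (by simp))
        rw [List.filter_cons_of_neg (by simpa using h), wsum_cons, he0, ihl]
        ring

lemma Wfn_posFilter {L : List (ℝ × PCSP A)} (hnn : NNL L) (t : SCSP A) :
    Wfn (L.filter (fun e => decide (0 < e.1))) t = Wfn L t := by
  induction L with
  | nil => rfl
  | cons e l ih =>
      have ihl := ih (fun e' he' => hnn e' (by simp [he']))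
      by_cases h : 0 < e.1
      · rw [List.filter_cons_of_pos (by simpa using h), Wfn_cons, Wfn_cons, ihl]
      · have he0 : e.1 = 0 := le_antisymm (not_lt.1 h) (hnn e (by simp))
        rw [List.filter_cons_of_neg (by simpa using h), Wfn_cons, he0, ihl]
        ring

/-- Completeness for nonnegative state-based lists. -/
lemma complete_state {L₁ L₂ : List (ℝ × PCSP A)} (hnn1 : NNL L₁) (hnn2 : NNL L₂)
    (hst1 : StateL L₁) (hst2 : StateL L₂) (hs1 : wsum L₁ = 1) (hs2 : wsum L₂ = 1)
    (hW : ∀ t, Wfn L₁ t = Wfn L₂ t) : EqE (mix L₁) (mix L₂) := by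
  rw [← mix_posFilter L₁.length L₁ le_rfl, ← mix_posFilter L₂.length L₂ le_rfl]
  refine complete_pos (L₁.filter _).length _ _ le_rfl ?_ ?_ ?_ ?_ ?_ ?_ ?_
  · intro e he
    have h := List.mem_filter.1 he
    simpa using h.2
  · intro e he
    have h := List.mem_filter.1 he
    simpa using h.2
  · exact fun e he => hst1 e (List.mem_of_mem_filter he)
  · exact fun e he => hst2 e (List.mem_of_mem_filter he)
  · rw [wsum_posFilter hnn1]; exact hs1
  · rw [wsum_posFilter hnn2]; exact hs2
  · intro t
    rw [Wfn_posFilter hnn1, Wfn_posFilter hnn2]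
    exact hW t


lemma scaleL_append (c : ℝ) (a b : List (ℝ × PCSP A)) :
    scaleL c (a ++ b) = scaleL c a ++ scaleL c b := by simp [scaleL]

lemma mix_zero_prefix : ∀ (l₀ L : List (ℝ × PCSP A)), (∀ e ∈ l₀, e.1 ≤ 0) →
    mix (l₀ ++ L) = mix L
  | [], L, _ => rfl
  | (w,P)::l, L, h => by
      rw [List.cons_append, mix_cons, if_pos (h (w,P) (List.mem_cons_self))]
      exact mix_zero_prefix l L (fun e he => h e (by simp [he]))

/-- Splitting a probabilistic combination of two lists. -/
lemma mix_split : ∀ (n : ℕ) (L₁ L₂ : List (ℝ × PCSP A)) (p : ℝ),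
    L₁.length ≤ n → 0 < p → p < 1 → NNL L₁ → wsum L₁ = 1 →
    EqE (mix (scaleL p L₁ ++ scaleL (1-p) L₂)) (.pch p (mix L₁) (mix L₂))
  | _, [], _, _, _, _, _, _, hs => by simp at hs
  | 0, e::l, _, _, hlen, _, _, _, _ => by simp at hlen
  | n+1, (w,R)::l, L₂, p, hlen, hp0, hp1, hnn, hs => by
      have hw0 : 0 ≤ w := hnn (w, R) (List.mem_cons_self)
      have hlnn : NNL l := fun e he => hnn e (by simp [he])
      have hls : 0 ≤ wsum l := wsum_nonneg hlnn
      simp only [wsum_cons] at hs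
      have hw1 : w ≤ 1 := by linarith
      rw [scaleL_cons, List.cons_append]
      rcases eq_or_lt_of_le hw0 with h0 | h0
      · -- w = 0
        rw [mix_cons, if_pos (by rw [← h0, mul_zero])]
        rw [mix_cons (((w, R) : ℝ × PCSP A).1), if_pos (by simp only; rw [← h0])]
        exact mix_split n l L₂ p (by simpa using hlen) hp0 hp1 hlnn (by linarith)
      · -- w > 0
        have hpw0 : 0 < p*w := mul_pos hp0 h0
        have hpw1 : p*w < 1 := by nlinarith
        have hpwne : (1:ℝ) - p*w ≠ 0 := by nlinarith
        rw [mix_cons_pos hpw0 hpw1, scaleL_append, scaleL_scaleL, scaleL_scaleL]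
        rcases eq_or_lt_of_le hw1 with h1 | h1
        · -- w = 1 : the rest of l has weight 0
          have hl0 : ∀ e ∈ l, e.1 = 0 :=
            all_zero_of_wsum_zero hlnn (by linarith)
          have hz : ∀ e ∈ scaleL ((1-p*w)⁻¹ * p) l, e.1 ≤ 0 := by
            intro e he
            simp only [scaleL, List.mem_map] at he
            obtain ⟨e', he', rfl⟩ := he
            rw [hl0 e' he']
            simp
          have h1p' : (1:ℝ) - p ≠ 0 := by linarith
          rw [mix_zero_prefix _ _ hz]
          rw [show (1-p*w)⁻¹ * (1-p) = 1 by rw [h1, mul_one, inv_mul_cancel₀ h1p']]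
          rw [scaleL_one]
          rw [mix_cons_one h0 (le_of_eq h1.symm)]
          rw [show p * w = p by rw [h1, mul_one]]
          exact .refl _
        · -- w < 1
          have h1w : (0:ℝ) < 1 - w := by linarith
          have h1w' : (1:ℝ) - w ≠ 0 := ne_of_gt h1w
          have hD : (0:ℝ) < 1 - p*w := by nlinarith
          set p' := p * (1-w) / (1 - p*w) with hp'
          have hp'0 : 0 < p' := div_pos (mul_pos hp0 h1w) hD
          have hp'1 : p' < 1 := by rw [hp', div_lt_one hD]; nlinarith
          have hinv : 0 < (1-w)⁻¹ := by positivity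
          have ih := mix_split n (scaleL (1-w)⁻¹ l) L₂ p'
            (by simpa using hlen) hp'0 hp'1
            (NNL_scaleL (le_of_lt hinv) hlnn)
            (by rw [wsum_scaleL]; field_simp; linarith)
          rw [scaleL_scaleL] at ih
          rw [show p' * (1-w)⁻¹ = (1-p*w)⁻¹ * p by rw [hp']; field_simp] at ih
          rw [show (1:ℝ) - p' = (1-p*w)⁻¹ * (1-p) by rw [hp']; field_simp; ring] at ih
          rw [mix_cons_pos h0 h1]
          have key := EqE.P3 w p h0 h1 hp0 hp1 R (mix (scaleL (1-w)⁻¹ l)) (mix L₂)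
          rw [show w * p = p * w by ring] at key
          rw [show (1-w)*p/(1-p*w) = p' by rw [hp']; ring_nf] at key
          exact (EqE.congPch _ (.refl _) ih).trans key.symm

/-- Characterisation of lists denoting a point distribution. -/
lemma complete_dirac (s : SCSP A) : ∀ (n : ℕ) (L : List (ℝ × PCSP A)), L.length ≤ n →
    NNL L → StateL L → wsum L = 1 → (∀ t, Wfn L t = dirac s t) → EqE (.st s) (mix L)
  | _, [], _, _, _, hs, _ => by simp at hs
  | 0, e::l, hlen, _, _, _, _ => by simp at hlen
  | n+1, (w,T)::l, hlen, hnn, hst, hs, hW => by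
      obtain ⟨t0, hT⟩ := hst (w,T) (List.mem_cons_self)
      simp only at hT
      subst hT
      have hw0 : 0 ≤ w := hnn (w, .st t0) (List.mem_cons_self)
      have hlnn : NNL l := fun e he => hnn e (by simp [he])
      have hlst : StateL l := fun e he => hst e (by simp [he])
      have hls : 0 ≤ wsum l := wsum_nonneg hlnn
      simp only [wsum_cons] at hs
      rw [mix_cons]
      split_ifs with h0 h1
      · have hw : w = 0 := le_antisymm h0 hw0
        apply complete_dirac s n l (by simpa using hlen) hlnn hlst (by linarith)
        intro t
        have h := hW t
        rw [Wfn_cons, hw] at h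
        simpa using h
      · have hw : w = 1 := le_antisymm (by linarith) h1
        have hts : t0 = s := by
          by_contra hne
          have h := hW t0
          rw [Wfn_cons, interp_st, dirac_self, hw] at h
          simp only at h
          have h2 := Wfn_nonneg_state hlst hlnn t0
          rw [show dirac s t0 = 0 from if_neg hne] at h
          linarith
        rw [hts]
        exact .refl _
      · push_neg at h0 h1
        have h1w : (0:ℝ) < 1 - w := by linarith
        have h1w' : (1:ℝ) - w ≠ 0 := ne_of_gt h1w
        have hinv : 0 < (1-w)⁻¹ := by positivity
        have hts : t0 = s := by
          by_contra hne
          have h := hW t0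
          rw [Wfn_cons, interp_st, dirac_self] at h
          simp only at h
          have h2 := Wfn_nonneg_state hlst hlnn t0
          rw [show dirac s t0 = 0 from if_neg hne] at h
          nlinarith
        rw [← hts] at hW ⊢
        have ih := complete_dirac t0 n (scaleL (1-w)⁻¹ l) (by simpa using hlen)
          (NNL_scaleL (le_of_lt hinv) hlnn) (StateL_scaleL hlst)
          (by rw [wsum_scaleL]; field_simp; linarith)
          (by
            intro t
            rw [Wfn_scaleL]
            have h := hW t
            rw [Wfn_cons, interp_st] at h
            simp only at h
            field_simp
            linarith)
        exact (EqE.P1 w h0 h1 (.st t0)).symm.trans (EqE.congPch w (.refl _) ih)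

/-- The canonical state-based list of a distribution. -/
noncomputable def canonL (Δ : Wt (SCSP A)) (hfin : (dsupp Δ).Finite) :
    List (ℝ × PCSP A) :=
  hfin.toFinset.toList.map (fun s => (Δ s, PCSP.st s))

lemma canonL_NNL {P : PCSP A} (h : PWF P) :
    NNL (canonL P.interp (dsupp_interp_finite P)) := by
  intro e he
  simp only [canonL, List.mem_map] at he
  obtain ⟨t, _, rfl⟩ := he
  exact interp_nonneg h t

lemma canonL_StateL (Δ : Wt (SCSP A)) (hfin : (dsupp Δ).Finite) :
    StateL (canonL Δ hfin) := by
  intro e he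
  simp only [canonL, List.mem_map] at he
  obtain ⟨t, _, rfl⟩ := he
  exact ⟨t, rfl⟩

lemma canonL_wsum {P : PCSP A} (h : PWF P) :
    wsum (canonL P.interp (dsupp_interp_finite P)) = 1 := by
  unfold wsum canonL
  rw [List.map_map]
  have : (Prod.fst ∘ fun s => (P.interp s, PCSP.st s)) = P.interp := rfl
  rw [this, Finset.sum_map_toList]
  exact interp_sum_finset h (fun t ht => by
    simpa [Set.Finite.mem_toFinset] using ht)

lemma canonL_Wfn {P : PCSP A} (h : PWF P) (t : SCSP A) :
    Wfn (canonL P.interp (dsupp_interp_finite P)) t = P.interp t := by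
  unfold Wfn canonL
  rw [List.map_map]
  have e1 : ((fun e : ℝ × PCSP A => e.1 * e.2.interp t) ∘ fun s => (P.interp s, PCSP.st s))
      = fun s => if t = s then P.interp s else 0 := by
    funext s
    simp only [Function.comp, interp_st, dirac]
    split <;> ring
  rw [e1, Finset.sum_map_toList, Finset.sum_ite_eq]
  split_ifs with hmem
  · rfl
  · have : P.interp t = 0 := by
      by_contra hne
      exact hmem (by simpa [Set.Finite.mem_toFinset, dsupp, Function.mem_support] using hne)
    rw [this]

/-- Every well-formed term is provably equal to any state-based list
representation of its interpretation. -/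
lemma complete_list : ∀ {P : PCSP A}, PWF P → ∀ (L : List (ℝ × PCSP A)),
    NNL L → StateL L → wsum L = 1 → (∀ t, Wfn L t = P.interp t) → EqE P (mix L)
  | .st s, _, L, hnn, hst, hs, hW =>
      complete_dirac s L.length L le_rfl hnn hst hs
        (fun t => by rw [hW t, interp_st])
  | .pch p P₁ P₂, h, L, hnn, hst, hs, hW => by
      cases h with
      | pch h0 h1 hP hQ =>
        set L₁ := canonL P₁.interp (dsupp_interp_finite P₁) with hL₁
        set L₂ := canonL P₂.interp (dsupp_interp_finite P₂) with hL₂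
        have e₁ := complete_list hP L₁ (canonL_NNL hP) (canonL_StateL _ _)
          (canonL_wsum hP) (fun t => canonL_Wfn hP t)
        have e₂ := complete_list hQ L₂ (canonL_NNL hQ) (canonL_StateL _ _)
          (canonL_wsum hQ) (fun t => canonL_Wfn hQ t)
        have esplit := mix_split L₁.length L₁ L₂ p le_rfl h0 h1
          (canonL_NNL hP) (canonL_wsum hP)
        have hnnbig : NNL (scaleL p L₁ ++ scaleL (1-p) L₂) := by
          intro e he
          rcases List.mem_append.1 he with h' | h'
          · exact (NNL_scaleL (le_of_lt h0) (canonL_NNL hP)) e h'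
          · exact (NNL_scaleL (by linarith) (canonL_NNL hQ)) e h'
        have hstbig : StateL (scaleL p L₁ ++ scaleL (1-p) L₂) := by
          intro e he
          rcases List.mem_append.1 he with h' | h'
          · exact (StateL_scaleL (canonL_StateL _ _)) e h'
          · exact (StateL_scaleL (canonL_StateL _ _)) e h'
        have hsbig : wsum (scaleL p L₁ ++ scaleL (1-p) L₂) = 1 := by
          rw [wsum_append, wsum_scaleL, wsum_scaleL, canonL_wsum hP, canonL_wsum hQ]
          ring
        have hWbig : ∀ t, Wfn (scaleL p L₁ ++ scaleL (1-p) L₂) t = Wfn L t := by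
          intro t
          rw [Wfn_append, Wfn_scaleL, Wfn_scaleL, canonL_Wfn hP, canonL_Wfn hQ, hW t]
          rfl
        have estate := complete_state hnnbig hnn hstbig hst hsbig hs hWbig
        exact ((EqE.congPch p e₁ e₂).trans esplit.symm).trans estate

/-- Completeness of the probabilistic axioms: equal interpretations are provably equal. -/
lemma interp_complete {P Q : PCSP A} (hP : PWF P) (hQ : PWF Q)
    (h : P.interp = Q.interp) : EqE P Q := by
  have e₂ := complete_list hQ (canonL Q.interp (dsupp_interp_finite Q))
    (canonL_NNL hQ) (canonL_StateL _ _) (canonL_wsum hQ) (fun t => canonL_Wfn hQ t)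
  have e₁ := complete_list hP (canonL Q.interp (dsupp_interp_finite Q))
    (canonL_NNL hQ) (canonL_StateL _ _) (canonL_wsum hQ)
    (fun t => by rw [canonL_Wfn hQ t, ← h])
  exact e₁.trans e₂.symm


/-! #### Single transitions of nCSP states and derivations -/

lemma stepTerm {s : SCSP A} {α : Option A} {Δ : Wt (SCSP A)} (h : Step s α Δ) :
    SWF s → SNoPar s →
    ∃ R : PCSP A, PWF R ∧ PNoPar R ∧ R.interp = Δ ∧
      (α = none → LeMust (.st s) R ∧ LeMay R (.st s)) ∧
      (∀ a : A, α = some a → LeMay (.st (.pre a R)) (.st s)) := by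
  induction h with
  | pre a P =>
      intro hwf hnp
      cases hwf with
      | pre hP =>
        cases hnp with
        | pre hPn =>
          refine ⟨P, hP, hPn, rfl, fun h => absurd h (Option.some_ne_none _), fun b hb => ?_⟩
          injection hb with hab
          subst hab
          exact LeMay.rfl _
  | ichL P Q =>
      intro hwf hnp
      cases hwf with
      | ich hP hQ =>
        cases hnp with
        | ich hPn hQn =>
          refine ⟨P, hP, hPn, rfl, fun _ => ⟨?_, LeMay.may1 P Q⟩,
            fun b hb => nomatch hb⟩
          exact (LeMust.ofEq (EqE.I2 P Q)).trans (LeMust.must1 Q P)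
  | ichR P Q =>
      intro hwf hnp
      cases hwf with
      | ich hP hQ =>
        cases hnp with
        | ich hPn hQn =>
          exact ⟨Q, hQ, hQn, rfl,
            fun _ => ⟨LeMust.must1 P Q,
              (LeMay.may1 Q P).trans (LeMay.ofEq (EqE.I2 Q P))⟩,
            fun b hb => nomatch hb⟩
  | @echL s₁ s₂ a Δ' hstep ih =>
      intro hwf hnp
      cases hwf with
      | ech h1 h2 =>
        cases hnp with
        | ech h1n h2n =>
          obtain ⟨R, hR, hRn, hRi, _, hmay⟩ := ih h1 h1n
          refine ⟨R, hR, hRn, hRi, fun h => absurd h (Option.some_ne_none _), fun b hb => ?_⟩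
          injection hb with hab
          subst hab
          have step1 := hmay a rfl
          have step2 : LeMay (.st s₁) (echC (.st s₁) (.st s₂)) :=
            (LeMay.ofEq (EqE.symm (EqE.E1 (.st s₁)))).trans
              (LeMay.congEch (LeMay.rfl (.st s₁)) (LeMay.may2 (.st s₂)))
          exact step1.trans step2
  | @echR s₁ s₂ a Δ' hstep ih =>
      intro hwf hnp
      cases hwf with
      | ech h1 h2 =>
        cases hnp with
        | ech h1n h2n =>
          obtain ⟨R, hR, hRn, hRi, _, hmay⟩ := ih h2 h2n
          refine ⟨R, hR, hRn, hRi, fun h => absurd h (Option.some_ne_none _), fun b hb => ?_⟩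
          injection hb with hab
          subst hab
          have step1 := hmay a rfl
          have step2 : LeMay (.st s₂) (echC (.st s₁) (.st s₂)) :=
            ((LeMay.ofEq (EqE.symm (EqE.E1 (.st s₂)))).trans
              (LeMay.congEch (LeMay.rfl (.st s₂)) (LeMay.may2 (.st s₁)))).trans
              (LeMay.ofEq (EqE.E2 (.st s₂) (.st s₁)))
          exact step1.trans step2
  | @echTL s₁ s₂ Δ' hstep ih =>
      intro hwf hnp
      cases hwf with
      | ech h1 h2 =>
        cases hnp with
        | ech h1n h2n =>
          obtain ⟨R, hR, hRn, hRi, hmust, _⟩ := ih h1 h1n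
          refine ⟨echC R (.st s₂), echC_WF hR (.st h2), echC_NoPar hRn (.st h2n),
            ?_, fun _ => ⟨?_, ?_⟩, fun b hb => nomatch hb⟩
          · rw [interp_echC_st R s₂, hRi]
          · exact LeMust.congEch (hmust rfl).1 (LeMust.rfl (.st s₂))
          · exact LeMay.congEch (hmust rfl).2 (LeMay.rfl (.st s₂))
  | @echTR s₁ s₂ Δ' hstep ih =>
      intro hwf hnp
      cases hwf with
      | ech h1 h2 =>
        cases hnp with
        | ech h1n h2n =>
          obtain ⟨R, hR, hRn, hRi, hmust, _⟩ := ih h2 h2n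
          refine ⟨echC (.st s₁) R, echC_WF (.st h1) hR, echC_NoPar (.st h1n) hRn,
            ?_, fun _ => ⟨?_, ?_⟩, fun b hb => nomatch hb⟩
          · exact (interp_echCS R s₁).trans (by rw [hRi])
          · exact LeMust.congEch (LeMust.rfl (.st s₁)) (hmust rfl).1
          · exact LeMay.congEch (LeMay.rfl (.st s₁)) (hmust rfl).2
  | parL hstep hside ih => intro _ hnp; cases hnp
  | parR hstep hside ih => intro _ hnp; cases hnp
  | parS hmem h1 h2 ih1 ih2 => intro _ hnp; cases hnp

/-! #### Lifted transitions -/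

lemma forall₂_ofFn {α β : Type*} {W : α → β → Prop} : ∀ {n : ℕ} {f : Fin n → α}
    {g : Fin n → β}, (∀ i, W (f i) (g i)) → List.Forall₂ W (List.ofFn f) (List.ofFn g)
  | 0, f, g, _ => by
      rw [List.ofFn_zero, List.ofFn_zero]
      exact .nil
  | n+1, f, g, h => by
      rw [List.ofFn_succ, List.ofFn_succ]
      exact .cons (h 0) (forall₂_ofFn (fun i => h i.succ))

lemma wsum_ofFn {n : ℕ} (f : Fin n → ℝ × PCSP A) :
    wsum (List.ofFn f) = ∑ i, (f i).1 := by
  rw [wsum, List.map_ofFn, List.sum_ofFn]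
  rfl

lemma Wfn_ofFn {n : ℕ} (f : Fin n → ℝ × PCSP A) (t : SCSP A) :
    Wfn (List.ofFn f) t = ∑ i, (f i).1 * ((f i).2).interp t := by
  rw [Wfn, List.map_ofFn, List.sum_ofFn]
  rfl

lemma mem_ofFn' {α : Type*} {n : ℕ} {f : Fin n → α} {x : α}
    (h : x ∈ List.ofFn f) : ∃ i, f i = x := by
  rw [List.mem_ofFn] at h
  exact h

lemma liftTau {P : PCSP A} (hw : PWF P) (hn : PNoPar P) {Θ : Wt (SCSP A)}
    (h : Lift stepTauHat P.interp Θ) :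
    ∃ P', PWF P' ∧ PNoPar P' ∧ P'.interp = Θ ∧ LeMust P P' ∧ LeMay P' P := by
  obtain ⟨n, p, sfun, Φ, hp0, hp1, hΔ, hrel, hΘ⟩ := h
  have hchoice : ∀ i : Fin n, ∃ R : PCSP A,
      (p i = 0 → R = .st .nil) ∧
      (p i ≠ 0 → PWF R ∧ PNoPar R ∧ R.interp = Φ i ∧
        LeMust (.st (sfun i)) R ∧ LeMay R (.st (sfun i))) := by
    intro i
    by_cases hpi : p i = 0
    · exact ⟨.st .nil, fun _ => rfl, fun h => absurd hpi h⟩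
    · have hpipos : 0 < p i := lt_of_le_of_ne (hp0 i) (Ne.symm hpi)
      have hsupp : sfun i ∈ dsupp P.interp := by
        simp only [dsupp, Function.mem_support, hΔ]
        have hge : p i * dirac (sfun i) (sfun i)
            ≤ ∑ j, p j * dirac (sfun j) (sfun i) :=
          Finset.single_le_sum
            (f := fun j => p j * dirac (sfun j) (sfun i))
            (fun j _ => mul_nonneg (hp0 j) (dirac_nonneg _ _)) (Finset.mem_univ i)
        rw [dirac_self] at hge
        intro hc
        rw [hc] at hge
        nlinarith
      have hwf := supp_SWF hw hsupp
      have hnp := supp_SNoPar hn hsupp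
      rcases hrel i with hstep | heq
      · obtain ⟨R, h1, h2, h3, h4, _⟩ := stepTerm hstep hwf hnp
        exact ⟨R, fun h => absurd h hpi, fun _ => ⟨h1, h2, h3, (h4 rfl).1, (h4 rfl).2⟩⟩
      · exact ⟨.st (sfun i), fun h => absurd h hpi, fun _ =>
          ⟨.st hwf, .st hnp, (interp_st _).trans heq.symm, LeMust.rfl _, LeMay.rfl _⟩⟩
  choose R hR0 hR using hchoice
  set f₀ : Fin n → ℝ × PCSP A :=
    fun i => (p i, if p i = 0 then PCSP.st .nil else .st (sfun i)) with hf₀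
  set f₁ : Fin n → ℝ × PCSP A := fun i => (p i, R i) with hf₁
  set L₀ : List (ℝ × PCSP A) := List.ofFn f₀ with hL₀
  set L₁ : List (ℝ × PCSP A) := List.ofFn f₁ with hL₁
  have hnn0 : NNL L₀ := by
    intro e he
    obtain ⟨i, rfl⟩ := mem_ofFn' he
    exact hp0 i
  have hnn1 : NNL L₁ := by
    intro e he
    obtain ⟨i, rfl⟩ := mem_ofFn' he
    exact hp0 i
  have hws0 : wsum L₀ = 1 := by rw [hL₀, wsum_ofFn]; exact hp1
  have hws1 : wsum L₁ = 1 := by rw [hL₁, wsum_ofFn]; exact hp1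
  have hst0 : StateL L₀ := by
    intro e he
    obtain ⟨i, rfl⟩ := mem_ofFn' he
    by_cases hpi : p i = 0
    · exact ⟨.nil, by simp [hf₀, hpi]⟩
    · exact ⟨sfun i, by simp [hf₀, hpi]⟩
  have hWfn0 : ∀ t, Wfn L₀ t = P.interp t := by
    intro t
    rw [hL₀, Wfn_ofFn, hΔ]
    refine Finset.sum_congr rfl fun i _ => ?_
    by_cases hpi : p i = 0
    · simp [hf₀, hpi]
    · simp [hf₀, hpi]
  have hmix0 : EqE P (mix L₀) := complete_list hw L₀ hnn0 hst0 hws0 hWfn0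
  have hrel01 : List.Forall₂ (PairRel LeMust) L₀ L₁ := by
    rw [hL₀, hL₁]
    refine forall₂_ofFn fun i => ?_
    refine ⟨rfl, ?_⟩
    by_cases hpi : p i = 0
    · simp only [hf₀, hf₁, hpi, if_pos, hR0 i hpi]
      exact LeMust.rfl _
    · simp only [hf₀, hf₁, if_neg hpi]
      exact (hR i hpi).2.2.2.1
  have hrel10 : List.Forall₂ (PairRel LeMay) L₁ L₀ := by
    rw [hL₀, hL₁]
    refine forall₂_ofFn fun i => ?_
    refine ⟨rfl, ?_⟩
    by_cases hpi : p i = 0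
    · simp only [hf₀, hf₁, hpi, if_pos, hR0 i hpi]
      exact LeMay.rfl _
    · simp only [hf₀, hf₁, if_neg hpi]
      exact (hR i hpi).2.2.2.2
  refine ⟨mix L₁, ?_, ?_, ?_, ?_, ?_⟩
  · refine mix_WF fun e he hpos => ?_
    obtain ⟨i, rfl⟩ := mem_ofFn' he
    exact (hR i (ne_of_gt hpos)).1
  · refine mix_NoPar fun e he hpos => ?_
    obtain ⟨i, rfl⟩ := mem_ofFn' he
    exact (hR i (ne_of_gt hpos)).2.1
  · rw [interp_mix hnn1 hws1]
    funext t
    rw [hL₁, Wfn_ofFn, hΘ]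
    refine Finset.sum_congr rfl fun i _ => ?_
    by_cases hpi : p i = 0
    · simp [hf₁, hpi]
    · simp only [hf₁]
      rw [(hR i hpi).2.2.1]
  · exact (LeMust.ofEq hmix0).trans
      (mix_rel (fun P => LeMust.rfl P) LeMust.congPch hrel01)
  · exact (mix_rel (fun P => LeMay.rfl P) LeMay.congPch
      hrel10).trans (LeMay.ofEq hmix0.symm)

lemma liftA {R₁ : PCSP A} (hw : PWF R₁) (hn : PNoPar R₁) {a : A} {Δ₂ : Wt (SCSP A)}
    (h : StepD (some a) R₁.interp Δ₂) :
    ∃ R₂, PWF R₂ ∧ PNoPar R₂ ∧ R₂.interp = Δ₂ ∧ LeMay (.st (.pre a R₂)) R₁ := by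
  obtain ⟨n, p, sfun, Φ, hp0, hp1, hΔ, hrel, hΘ⟩ := h
  have hchoice : ∀ i : Fin n, ∃ R : PCSP A,
      (p i = 0 → R = .st .nil) ∧
      (p i ≠ 0 → PWF R ∧ PNoPar R ∧ R.interp = Φ i ∧
        LeMay (.st (.pre a R)) (.st (sfun i))) := by
    intro i
    by_cases hpi : p i = 0
    · exact ⟨.st .nil, fun _ => rfl, fun h => absurd hpi h⟩
    · have hpipos : 0 < p i := lt_of_le_of_ne (hp0 i) (Ne.symm hpi)
      have hsupp : sfun i ∈ dsupp R₁.interp := by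
        simp only [dsupp, Function.mem_support, hΔ]
        have hge : p i * dirac (sfun i) (sfun i)
            ≤ ∑ j, p j * dirac (sfun j) (sfun i) :=
          Finset.single_le_sum
            (f := fun j => p j * dirac (sfun j) (sfun i))
            (fun j _ => mul_nonneg (hp0 j) (dirac_nonneg _ _)) (Finset.mem_univ i)
        rw [dirac_self] at hge
        intro hc
        rw [hc] at hge
        nlinarith
      have hwf := supp_SWF hw hsupp
      have hnp := supp_SNoPar hn hsupp
      obtain ⟨R, h1, h2, h3, _, h5⟩ := stepTerm (hrel i) hwf hnp
      exact ⟨R, fun h => absurd h hpi, fun _ => ⟨h1, h2, h3, h5 a rfl⟩⟩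
  choose R hR0 hR using hchoice
  set f₀ : Fin n → ℝ × PCSP A :=
    fun i => (p i, if p i = 0 then PCSP.st (.pre a (.st .nil)) else .st (sfun i)) with hf₀
  set f₁ : Fin n → ℝ × PCSP A := fun i => (p i, R i) with hf₁
  set L₀ : List (ℝ × PCSP A) := List.ofFn f₀ with hL₀
  set L₁ : List (ℝ × PCSP A) := List.ofFn f₁ with hL₁
  have hnn0 : NNL L₀ := by
    intro e he
    obtain ⟨i, rfl⟩ := mem_ofFn' he
    exact hp0 i
  have hnn1 : NNL L₁ := by
    intro e he
    obtain ⟨i, rfl⟩ := mem_ofFn' he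
    exact hp0 i
  have hws0 : wsum L₀ = 1 := by rw [hL₀, wsum_ofFn]; exact hp1
  have hws1 : wsum L₁ = 1 := by rw [hL₁, wsum_ofFn]; exact hp1
  have hst0 : StateL L₀ := by
    intro e he
    obtain ⟨i, rfl⟩ := mem_ofFn' he
    by_cases hpi : p i = 0
    · exact ⟨.pre a (.st .nil), by simp [hf₀, hpi]⟩
    · exact ⟨sfun i, by simp [hf₀, hpi]⟩
  have hWfn0 : ∀ t, Wfn L₀ t = R₁.interp t := by
    intro t
    rw [hL₀, Wfn_ofFn, hΔ]
    refine Finset.sum_congr rfl fun i _ => ?_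
    by_cases hpi : p i = 0
    · simp [hf₀, hpi]
    · simp [hf₀, hpi]
  have hmix0 : EqE R₁ (mix L₀) := complete_list hw L₀ hnn0 hst0 hws0 hWfn0
  have hrelpre : List.Forall₂ (PairRel LeMay) (preL a L₁) L₀ := by
    rw [hL₀, hL₁]
    have hpre : preL a (List.ofFn f₁)
        = List.ofFn (fun i => ((f₁ i).1, PCSP.st (.pre a (f₁ i).2))) := by
      rw [preL, List.map_ofFn]
      rfl
    rw [hpre]
    refine forall₂_ofFn fun i => ?_
    refine ⟨rfl, ?_⟩
    by_cases hpi : p i = 0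
    · simp only [hf₀, hf₁, hpi, if_pos, hR0 i hpi]
      exact LeMay.rfl _
    · simp only [hf₀, hf₁, if_neg hpi]
      exact (hR i hpi).2.2.2
  refine ⟨mix L₁, ?_, ?_, ?_, ?_⟩
  · refine mix_WF fun e he hpos => ?_
    obtain ⟨i, rfl⟩ := mem_ofFn' he
    exact (hR i (ne_of_gt hpos)).1
  · refine mix_NoPar fun e he hpos => ?_
    obtain ⟨i, rfl⟩ := mem_ofFn' he
    exact (hR i (ne_of_gt hpos)).2.1
  · rw [interp_mix hnn1 hws1]
    funext t
    rw [hL₁, Wfn_ofFn, hΘ]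
    refine Finset.sum_congr rfl fun i _ => ?_
    by_cases hpi : p i = 0
    · simp [hf₁, hpi]
    · simp only [hf₁]
      rw [(hR i hpi).2.2.1]
  · refine ((mix_pre a hnn1 hws1).trans
      (mix_rel (fun P => LeMay.rfl P) LeMay.congPch
        hrelpre)).trans (LeMay.ofEq hmix0.symm)

lemma tauStar_term {P : PCSP A} (hw : PWF P) (hn : PNoPar P) {Θ : Wt (SCSP A)}
    (h : TauStar P.interp Θ) :
    ∃ P', PWF P' ∧ PNoPar P' ∧ P'.interp = Θ ∧ LeMust P P' ∧ LeMay P' P := by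
  induction h with
  | refl => exact ⟨P, hw, hn, rfl, LeMust.rfl P, LeMay.rfl P⟩
  | tail h1 h2 ih =>
      obtain ⟨P', h1', h2', h3', h4', h5'⟩ := ih
      rw [← h3'] at h2
      obtain ⟨P'', g1, g2, g3, g4, g5⟩ := liftTau h1' h2' h2
      exact ⟨P'', g1, g2, g3, h4'.trans g4, g5.trans h5'⟩

end Completeness

end DerivativeAux

/-- Derivative lemma. -/
theorem derivative_lemma (A : Type) [Fintype A] (P Q : PCSP A)
    (hPn : PNoPar P) (hQn : PNoPar Q) (hPw : PWF P) (hQw : PWF Q) :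
    (TauStar P.interp Q.interp → LeMust P Q ∧ LeMay Q P) ∧
    (∀ a : A, WeakA a P.interp Q.interp → LeMay (.st (.pre a Q)) P) := by
  constructor
  · intro h
    obtain ⟨P', h1, h2, h3, h4, h5⟩ := tauStar_term hPw hPn h
    have he : EqE P' Q := interp_complete h1 hQw h3
    exact ⟨h4.trans (LeMust.ofEq he), (LeMay.ofEq he.symm).trans h5⟩
  · intro a h
    obtain ⟨Δ₁, Δ₂, h1, h2, h3⟩ := h
    obtain ⟨R₁, g1, g2, g3, g4, g5⟩ := tauStar_term hPw hPn h1
    rw [← g3] at h2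
    obtain ⟨R₂, k1, k2, k3, k4⟩ := liftA g1 g2 h2
    rw [← k3] at h3
    obtain ⟨R₃, m1, m2, m3, m4, m5⟩ := tauStar_term k1 k2 h3
    have he : EqE R₃ Q := interp_complete m1 hQw m3
    have hQR₂ : LeMay Q R₂ := (LeMay.ofEq he.symm).trans m5
    exact ((LeMay.congPre a hQR₂).trans k4).trans g5

end PaperPCSP
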